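/- arXiv:2205.02345 — 7 statements merged into one kernel-verified Lean document; each statement's English description precedes it below -/
import Mathlib

section
/- For every integer k ≥ 5, there exist vectors u = (u_0,…,u_{k−1}) and v = (v_0,…,v_{k−1}) in ℝ^k with all entries nonnegative satisfying: (i) Σ_{i=0}^{k−1}(u_i + v_i) = 1; (ii) for every real δ with −1/2 ≤ δ ≤ 1/2, (1/2−δ)·Σ_{i=0}^{k−1} u_i + (1/2+δ)·Σ_{i=0}^{k−1} v_i + Σ_{i=0}^{k−1} u_i·(−(1/2+δ)^i(1/2−δ)^{k−i} + (1/2−δ)^i(1/2+δ)^{k−i}) + Σ_{i=0}^{k−1} v_i·(−(1/2+δ)^{i+1}(1/2−δ)^{k−1−i} + (1/2−δ)^{i+1}(1/2+δ)^{k−1−i}) = 1/2; and (iii) p′ ≥ 1 − ((k−2)/(k−1))·p_1, where p_1 = Σ_{i=0}^{k−1} u_i and p′ = (1/(k−1))·Σ_{i=0}^{k−1} i·(u_i + v_i). -/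
open Finset

namespace Stmt1Helper

/-- difference of truncated ℕ-subtractions, cast to ℝ -/
lemma cast_sub_sub (x y : ℕ) : ((x - y : ℕ) : ℝ) - ((y - x : ℕ) : ℝ) = (x : ℝ) - (y : ℝ) := by
  rcases le_total x y with h | h
  · rw [Nat.sub_eq_zero_of_le h, Nat.cast_sub h]; simp
  · rw [Nat.sub_eq_zero_of_le h, Nat.cast_sub h]; simp

/-- telescoping sum over an interval -/
lemma tele (F : ℕ → ℝ) {a b : ℕ} (hab : a ≤ b) :
    ∑ i ∈ Ico a b, (F i - F (i + 1)) = F a - F b := by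
  rw [sum_Ico_eq_sub _ hab, sum_range_sub' F, sum_range_sub' F]
  ring

lemma choose_up {n i : ℕ} (h : i ≤ n / 2) : n.choose (i - 1) ≤ n.choose i := by
  rcases Nat.eq_zero_or_pos i with rfl | hi
  · simp
  · have h2 : i - 1 < n / 2 := by omega
    have h3 := Nat.choose_le_succ_of_lt_half_left h2
    have e : i - 1 + 1 = i := by omega
    rwa [e] at h3

lemma choose_down {n i : ℕ} (h : n / 2 ≤ i) : n.choose (i + 1) ≤ n.choose i := by
  rcases le_or_gt (i + 1) n with hin | hin
  · rcases lt_or_ge (n - (i + 1)) (n / 2) with hh | hh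
    · have h2 := Nat.choose_le_succ_of_lt_half_left hh
      have e : n - (i + 1) + 1 = n - i := by omega
      rw [e, Nat.choose_symm hin, Nat.choose_symm (by omega : i ≤ n)] at h2
      exact h2
    · have e : n - (i + 1) = i := by omega
      have h2 : n.choose (i + 1) = n.choose i := by
        conv_lhs => rw [← Nat.choose_symm hin]
        rw [e]
      omega
  · simp [Nat.choose_eq_zero_of_lt hin]

lemma mid_bound (n : ℕ) (hn : 4 ≤ n) : n.choose (n / 2) + 2 * n ≤ 2 ^ n := by
  induction n, hn using Nat.le_induction with
  | base => decide
  | succ n hn ih =>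
    obtain ⟨m, hm2⟩ : ∃ m, (n + 1) / 2 = m + 1 := ⟨(n + 1) / 2 - 1, by omega⟩
    have pas : (n + 1).choose ((n + 1) / 2) = n.choose m + n.choose (m + 1) := by
      rw [hm2]; exact Nat.choose_succ_succ n m
    have b1 := Nat.choose_le_middle m n
    have b2 := Nat.choose_le_middle (m + 1) n
    have hp : 2 ^ (n + 1) = 2 * 2 ^ n := by ring
    omega

lemma M_ge (n : ℕ) (hn : 4 ≤ n) : 4 ≤ n.choose (n / 2) := by
  have h1 : n.choose 1 ≤ n.choose (n / 2) := Nat.choose_le_middle 1 n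
  rw [Nat.choose_one_right] at h1
  omega


def Aa (n i : ℕ) : ℕ := n.choose (i - 1) - n.choose i
def Ab (n i : ℕ) : ℕ := n.choose i - n.choose (i - 1)

lemma Aa_zero (n : ℕ) : Aa n 0 = 0 := by simp [Aa]
lemma Ab_zero (n : ℕ) : Ab n 0 = 0 := by simp [Ab]
lemma Aa_top (n : ℕ) : Aa n (n + 1) = 1 := by
  simp [Aa, Nat.choose_eq_zero_of_lt (by omega : n < n + 1)]

lemma Aa_low (n i : ℕ) (h : i ≤ n / 2) : Aa n i = 0 :=
  Nat.sub_eq_zero_of_le (choose_up h)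

lemma Aa_cast (n i : ℕ) (h : n / 2 < i) :
    ((Aa n i : ℕ) : ℝ) = (n.choose (i - 1) : ℝ) - (n.choose i : ℝ) := by
  have h2 : n.choose i ≤ n.choose (i - 1) := by
    have h3 := choose_down (n := n) (i := i - 1) (by omega)
    have e : i - 1 + 1 = i := by omega
    rwa [e] at h3
  rw [Aa, Nat.cast_sub h2]

lemma symA (n m : ℕ) (h1 : 1 ≤ m) (hm : m ≤ n) : Aa n (n + 1 - m) = Ab n m := by
  unfold Aa Ab
  have e1 : n + 1 - m - 1 = n - m := by omega
  have e2 : n + 1 - m = n - (m - 1) := by omega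
  rw [e1, e2, Nat.choose_symm hm, Nat.choose_symm (by omega : m - 1 ≤ n)]

lemma symB (n m : ℕ) (h1 : 1 ≤ m) (hm : m ≤ n) : Ab n (n + 1 - m) = Aa n m := by
  unfold Aa Ab
  have e1 : n + 1 - m - 1 = n - m := by omega
  have e2 : n + 1 - m = n - (m - 1) := by omega
  rw [e1, e2, Nat.choose_symm hm, Nat.choose_symm (by omega : m - 1 ≤ n)]

/-- sum of the increments Aa over range (n+1) -/
lemma sum_Aa (n : ℕ) (hn : 1 ≤ n) :
    ∑ i ∈ range (n + 1), ((Aa n i : ℕ) : ℝ) = (n.choose (n / 2) : ℝ) - 1 := by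
  have hJ1 : 0 ≤ n / 2 + 1 := Nat.zero_le _
  have hJ2 : n / 2 + 1 ≤ n + 1 := by omega
  rw [range_eq_Ico, ← sum_Ico_consecutive _ hJ1 hJ2]
  have h1 : ∑ i ∈ Ico 0 (n / 2 + 1), ((Aa n i : ℕ) : ℝ) = 0 := by
    apply sum_eq_zero
    intro i hi
    rw [mem_Ico] at hi
    rw [Aa_low n i (by omega)]
    simp
  have h2 : ∑ i ∈ Ico (n / 2 + 1) (n + 1), ((Aa n i : ℕ) : ℝ)
      = ∑ i ∈ Ico (n / 2 + 1) (n + 1),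
        ((fun j => (n.choose (j - 1) : ℝ)) i - (fun j => (n.choose (j - 1) : ℝ)) (i + 1)) := by
    apply sum_congr rfl
    intro i hi
    rw [mem_Ico] at hi
    rw [Aa_cast n i (by omega)]
    simp
  rw [h1, h2, tele _ (by omega : n / 2 + 1 ≤ n + 1)]
  simp [Nat.choose_self]

lemma sum_choose_real (n : ℕ) :
    ∑ i ∈ range (n + 1), ((n.choose i : ℕ) : ℝ) = 2 ^ n := by
  rw [← Nat.cast_sum]
  rw [Nat.sum_range_choose]
  push_cast
  ring

lemma refl_half (n : ℕ) :
    ∑ i ∈ range (n / 2 + 1), ((n.choose i : ℕ) : ℝ)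
      = ∑ i ∈ Ico (n - n / 2) (n + 1), ((n.choose i : ℕ) : ℝ) := by
  rw [sum_Ico_eq_sum_range]
  have e : n + 1 - (n - n / 2) = n / 2 + 1 := by omega
  rw [e]
  rw [← sum_range_reflect (fun i => ((n.choose (n - n / 2 + i) : ℕ) : ℝ)) (n / 2 + 1)]
  apply sum_congr rfl
  intro i hi
  rw [mem_range] at hi
  have e2 : n - n / 2 + (n / 2 + 1 - 1 - i) = n - i := by omega
  rw [e2, Nat.choose_symm (by omega : i ≤ n)]

lemma sum_mid (n : ℕ) :
    ∑ i ∈ Ico (n - n / 2) (n / 2 + 1), ((n.choose i : ℕ) : ℝ)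
      = ((2 * (n / 2) + 1 - n : ℕ) : ℝ) * (n.choose (n / 2) : ℝ) := by
  rcases Nat.even_or_odd n with ⟨m, hm⟩ | ⟨m, hm⟩
  · have e2 : n - n / 2 = n / 2 := by omega
    have e3 : (2 * (n / 2) + 1 - n : ℕ) = 1 := by omega
    rw [e2, e3]
    rw [show Ico (n / 2) (n / 2 + 1) = {n / 2} by rw [Ico_add_one_right_eq_Icc, Icc_self]]
    simp
  · have e2 : n - n / 2 = n / 2 + 1 := by omega
    have e3 : (2 * (n / 2) + 1 - n : ℕ) = 0 := by omega
    rw [e2, e3, Ico_self]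
    simp

lemma sum_iAa (n : ℕ) (hn : 1 ≤ n) :
    2 * ∑ i ∈ range (n + 1), (i : ℝ) * ((Aa n i : ℕ) : ℝ)
      = 2 ^ n + ((n : ℝ) + 1) * (n.choose (n / 2) : ℝ) - 2 * ((n : ℝ) + 1) := by
  have hJ2 : n / 2 + 1 ≤ n + 1 := by omega
  have hsplit : ∑ i ∈ range (n + 1), (i : ℝ) * ((Aa n i : ℕ) : ℝ)
      = ∑ i ∈ Ico (n / 2 + 1) (n + 1), (i : ℝ) * ((Aa n i : ℕ) : ℝ) := by
    rw [range_eq_Ico, ← sum_Ico_consecutive _ (Nat.zero_le _) hJ2]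
    have h1 : ∑ i ∈ Ico 0 (n / 2 + 1), (i : ℝ) * ((Aa n i : ℕ) : ℝ) = 0 := by
      apply sum_eq_zero
      intro i hi
      rw [mem_Ico] at hi
      rw [Aa_low n i (by omega)]
      simp
    rw [h1, zero_add]
  have hpt : ∑ i ∈ Ico (n / 2 + 1) (n + 1), (i : ℝ) * ((Aa n i : ℕ) : ℝ)
      = ∑ i ∈ Ico (n / 2 + 1) (n + 1),
          (((fun j : ℕ => (j : ℝ) * (n.choose (j - 1) : ℝ)) i
            - (fun j : ℕ => (j : ℝ) * (n.choose (j - 1) : ℝ)) (i + 1))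
           + (n.choose i : ℝ)) := by
    apply sum_congr rfl
    intro i hi
    rw [mem_Ico] at hi
    rw [Aa_cast n i (by omega)]
    dsimp only
    have e : i + 1 - 1 = i := by omega
    rw [e]
    push_cast
    ring
  have htele := tele (fun j : ℕ => (j : ℝ) * (n.choose (j - 1) : ℝ)) hJ2
  have hH : 2 * ∑ i ∈ Ico (n / 2 + 1) (n + 1), ((n.choose i : ℕ) : ℝ)
      = 2 ^ n - ((2 * (n / 2) + 1 - n : ℕ) : ℝ) * (n.choose (n / 2) : ℝ) := by
    have hs1 : ∑ i ∈ range (n + 1), ((n.choose i : ℕ) : ℝ)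
        = ∑ i ∈ Ico 0 (n / 2 + 1), ((n.choose i : ℕ) : ℝ)
          + ∑ i ∈ Ico (n / 2 + 1) (n + 1), ((n.choose i : ℕ) : ℝ) := by
      rw [range_eq_Ico, ← sum_Ico_consecutive _ (Nat.zero_le _) hJ2]
    have hs2 : ∑ i ∈ Ico 0 (n / 2 + 1), ((n.choose i : ℕ) : ℝ)
        = ∑ i ∈ Ico (n - n / 2) (n / 2 + 1), ((n.choose i : ℕ) : ℝ)
          + ∑ i ∈ Ico (n / 2 + 1) (n + 1), ((n.choose i : ℕ) : ℝ) := by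
      rw [← range_eq_Ico, refl_half,
        ← sum_Ico_consecutive _ (by omega : n - n / 2 ≤ n / 2 + 1) hJ2]
    have h2n := sum_choose_real n
    rw [sum_mid] at hs2
    linarith
  rw [hsplit, hpt, sum_add_distrib, htele]
  have e1 : n / 2 + 1 - 1 = n / 2 := by omega
  have e2 : n + 1 - 1 = n := by omega
  rw [e1, e2, Nat.choose_self]
  have hcast : ((2 * (n / 2) + 1 - n : ℕ) : ℝ) = 2 * ((n / 2 : ℕ) : ℝ) + 1 - n := by
    have h3 : n ≤ 2 * (n / 2) + 1 := by omega
    push_cast [Nat.cast_sub h3]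
    ring
  rw [hcast] at hH
  push_cast
  linarith

/-- the antisymmetric kernel -/
noncomputable def ff (n : ℕ) (P Q : ℝ) (i : ℕ) : ℝ :=
  Q ^ i * P ^ (n + 1 - i) - P ^ i * Q ^ (n + 1 - i)

lemma ff_zero (n : ℕ) (P Q : ℝ) : ff n P Q 0 = P ^ (n + 1) - Q ^ (n + 1) := by
  simp [ff]

lemma ff_reflect (n : ℕ) (P Q : ℝ) (m : ℕ) (hm : m ≤ n + 1) :
    ff n P Q (n + 1 - m) = - ff n P Q m := by
  unfold ff
  have e : n + 1 - (n + 1 - m) = m := by omega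
  rw [e]
  ring

/-- plain binomial sum against the kernel -/
lemma sum_binom_ff (n : ℕ) (P Q : ℝ) (hPQ : P + Q = 1) :
    ∑ i ∈ range (n + 1), (n.choose i : ℝ) * ff n P Q i = P - Q := by
  have key : ∀ X Y : ℝ, X + Y = 1 →
      ∑ i ∈ range (n + 1), (n.choose i : ℝ) * (X ^ i * Y ^ (n + 1 - i)) = Y := by
    intro X Y hXY
    have h1 : ∑ i ∈ range (n + 1), (n.choose i : ℝ) * (X ^ i * Y ^ (n + 1 - i))
        = Y * ∑ i ∈ range (n + 1), X ^ i * Y ^ (n - i) * (n.choose i : ℝ) := by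
      rw [mul_sum]
      apply sum_congr rfl
      intro i hi
      rw [mem_range] at hi
      have e : n + 1 - i = (n - i) + 1 := by omega
      rw [e, pow_succ]
      ring
    rw [h1, ← add_pow, hXY, one_pow, mul_one]
  have h2 : ∑ i ∈ range (n + 1), (n.choose i : ℝ) * ff n P Q i
      = (∑ i ∈ range (n + 1), (n.choose i : ℝ) * (Q ^ i * P ^ (n + 1 - i)))
        - ∑ i ∈ range (n + 1), (n.choose i : ℝ) * (P ^ i * Q ^ (n + 1 - i)) := by
    rw [← sum_sub_distrib]
    apply sum_congr rfl
    intro i _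
    unfold ff
    ring
  rw [h2, key Q P (by linarith), key P Q hPQ]

/-- shifted binomial sum against the kernel -/
lemma sum_binom_shift_ff (n : ℕ) (P Q : ℝ) (hPQ : P + Q = 1) :
    ∑ i ∈ range (n + 1), (n.choose (i - 1) : ℝ) * ff n P Q i
      = 2 * (P ^ (n + 1) - Q ^ (n + 1)) - (P - Q) := by
  rw [sum_range_succ']
  have h0 : (n.choose (0 - 1) : ℝ) * ff n P Q 0 = P ^ (n + 1) - Q ^ (n + 1) := by
    rw [ff_zero]
    norm_num
  have key : ∀ X Y : ℝ, X + Y = 1 →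
      ∑ i ∈ range n, (n.choose i : ℝ) * (X ^ (i + 1) * Y ^ (n - i)) = X * (1 - X ^ n) := by
    intro X Y hXY
    have h1 : ∑ i ∈ range n, (n.choose i : ℝ) * (X ^ (i + 1) * Y ^ (n - i))
        = X * ∑ i ∈ range n, X ^ i * Y ^ (n - i) * (n.choose i : ℝ) := by
      rw [mul_sum]
      apply sum_congr rfl
      intro i _
      rw [pow_succ]
      ring
    have h2 : ∑ i ∈ range (n + 1), X ^ i * Y ^ (n - i) * (n.choose i : ℝ)
        = (∑ i ∈ range n, X ^ i * Y ^ (n - i) * (n.choose i : ℝ)) + X ^ n := by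
      rw [sum_range_succ]
      simp
    have h3 := add_pow X Y n
    rw [hXY, one_pow] at h3
    rw [h1]
    rw [← h3] at h2
    -- h2 : 1 = partial + X^n
    have h4 : ∑ i ∈ range n, X ^ i * Y ^ (n - i) * (n.choose i : ℝ) = 1 - X ^ n := by
      linarith
    rw [h4]
  have hsum : ∑ i ∈ range n, (n.choose (i + 1 - 1) : ℝ) * ff n P Q (i + 1)
      = (∑ i ∈ range n, (n.choose i : ℝ) * (Q ^ (i + 1) * P ^ (n - i)))
        - ∑ i ∈ range n, (n.choose i : ℝ) * (P ^ (i + 1) * Q ^ (n - i)) := by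
    rw [← sum_sub_distrib]
    apply sum_congr rfl
    intro i _
    have e1 : i + 1 - 1 = i := by omega
    have e2 : n + 1 - (i + 1) = n - i := by omega
    rw [e1]
    unfold ff
    rw [e2]
    ring
  rw [hsum, key Q P (by linarith), key P Q hPQ, h0]
  ring

/-- the absolute-difference sum cancels against the kernel -/
lemma sum_abs_ff (n : ℕ) (P Q : ℝ) :
    ∑ i ∈ range (n + 1), ((Aa n i + Ab n i : ℕ) : ℝ) * ff n P Q i = 0 := by
  rw [sum_range_succ']
  have h0 : ((Aa n 0 + Ab n 0 : ℕ) : ℝ) * ff n P Q 0 = 0 := by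
    rw [Aa_zero, Ab_zero]
    simp
  rw [h0, add_zero]
  set G : ℕ → ℝ := fun i => ((Aa n (i + 1) + Ab n (i + 1) : ℕ) : ℝ) * ff n P Q (i + 1) with hG
  have hrefl : ∑ i ∈ range n, G i = ∑ i ∈ range n, G (n - 1 - i) := (sum_range_reflect G n).symm
  have hneg : ∀ i ∈ range n, G (n - 1 - i) = - G i := by
    intro i hi
    rw [mem_range] at hi
    have e : n - 1 - i + 1 = n + 1 - (i + 1) := by omega
    rw [hG]
    dsimp only
    rw [e, symA n (i + 1) (by omega) (by omega), symB n (i + 1) (by omega) (by omega),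
      ff_reflect n P Q (i + 1) (by omega)]
    push_cast
    ring
  have hneg2 : ∑ i ∈ range n, G i = - ∑ i ∈ range n, G i := by
    nth_rewrite 1 [hrefl]
    rw [sum_congr rfl hneg, sum_neg_distrib]
  linarith

def Mc (n : ℕ) : ℕ := n.choose (n / 2)
def Tc (n : ℕ) : ℕ := 2 * Mc n * (Mc n - 1)

noncomputable def uu (n i : ℕ) : ℝ := (((Mc n - 2) * Aa n i : ℕ) : ℝ) / ((Tc n : ℕ) : ℝ)
noncomputable def vv (n j : ℕ) : ℝ :=
  ((Mc n * Aa n (j + 1) + if j = n then Mc n - 2 else 0 : ℕ) : ℝ) / ((Tc n : ℕ) : ℝ)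

lemma uu_nonneg (n i : ℕ) : 0 ≤ uu n i := by
  unfold uu
  positivity

lemma vv_nonneg (n j : ℕ) : 0 ≤ vv n j := by
  unfold vv
  positivity

lemma Mc_ge (n : ℕ) (hn : 4 ≤ n) : 4 ≤ Mc n := M_ge n hn

lemma Tc_cast (n : ℕ) (hn : 4 ≤ n) :
    ((Tc n : ℕ) : ℝ) = 2 * (Mc n : ℝ) * ((Mc n : ℝ) - 1) := by
  have hM := Mc_ge n hn
  unfold Tc
  push_cast [Nat.cast_sub (by omega : 1 ≤ Mc n)]
  ring

lemma Tc_pos (n : ℕ) (hn : 4 ≤ n) : (0 : ℝ) < ((Tc n : ℕ) : ℝ) := by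
  have hM := Mc_ge n hn
  have h2 : 0 < Tc n := by
    have h3 : 1 ≤ Mc n - 1 := by omega
    have h4 : 1 ≤ Mc n := by omega
    unfold Tc
    positivity
  exact_mod_cast h2

lemma sum_shiftAa (n : ℕ) (hn : 1 ≤ n) :
    ∑ j ∈ range (n + 1), ((Aa n (j + 1) : ℕ) : ℝ) = (Mc n : ℝ) := by
  have h1 := sum_range_succ' (fun i => ((Aa n i : ℕ) : ℝ)) (n + 1)
  have h2 := sum_range_succ (fun i => ((Aa n i : ℕ) : ℝ)) (n + 1)
  rw [h2, sum_Aa n hn] at h1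
  rw [Aa_top, Aa_zero] at h1
  simp only [Nat.cast_one, Nat.cast_zero] at h1
  have := h1
  unfold Mc
  linarith

lemma sum_ishiftAa (n : ℕ) (hn : 1 ≤ n) :
    ∑ j ∈ range (n + 1), (j : ℝ) * ((Aa n (j + 1) : ℕ) : ℝ)
      = (∑ i ∈ range (n + 1), (i : ℝ) * ((Aa n i : ℕ) : ℝ)) + (n : ℝ) + 1 - (Mc n : ℝ) := by
  have h1 := sum_range_succ' (fun i => ((i : ℝ) - 1) * ((Aa n i : ℕ) : ℝ)) (n + 1)
  have h2 := sum_range_succ (fun i => ((i : ℝ) - 1) * ((Aa n i : ℕ) : ℝ)) (n + 1)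
  rw [h2] at h1
  rw [Aa_top, Aa_zero] at h1
  have h3 : ∑ j ∈ range (n + 1), (((j : ℕ) + 1 : ℕ) : ℝ) * ((Aa n (j + 1) : ℕ) : ℝ)
      - ∑ j ∈ range (n + 1), ((Aa n (j + 1) : ℕ) : ℝ)
      = ∑ j ∈ range (n + 1), (((j + 1 : ℕ) : ℝ) - 1) * ((Aa n (j + 1) : ℕ) : ℝ) := by
    rw [← sum_sub_distrib]
    apply sum_congr rfl
    intro j _
    push_cast
    ring
  have h4 : ∑ i ∈ range (n + 1), ((i : ℝ) - 1) * ((Aa n i : ℕ) : ℝ)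
      = (∑ i ∈ range (n + 1), (i : ℝ) * ((Aa n i : ℕ) : ℝ))
        - ∑ i ∈ range (n + 1), ((Aa n i : ℕ) : ℝ) := by
    rw [← sum_sub_distrib]
    apply sum_congr rfl
    intro i _
    ring
  have h5 : ∑ j ∈ range (n + 1), (((j : ℕ) + 1 : ℕ) : ℝ) * ((Aa n (j + 1) : ℕ) : ℝ)
      = (∑ j ∈ range (n + 1), (j : ℝ) * ((Aa n (j + 1) : ℕ) : ℝ))
        + ∑ j ∈ range (n + 1), ((Aa n (j + 1) : ℕ) : ℝ) := by
    rw [← sum_add_distrib]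
    apply sum_congr rfl
    intro j _
    push_cast
    ring
  rw [sum_shiftAa n hn] at h5
  rw [sum_shiftAa n hn] at h3
  rw [sum_Aa n hn] at h4
  simp only [Nat.cast_one, Nat.cast_zero] at h1
  unfold Mc at *
  push_cast at h1 h3 h4 h5 ⊢
  linarith

lemma ite_cast_split (n j : ℕ) :
    ((Mc n * Aa n (j + 1) + if j = n then Mc n - 2 else 0 : ℕ) : ℝ)
      = (Mc n : ℝ) * ((Aa n (j + 1) : ℕ) : ℝ)
        + (if j = n then ((Mc n - 2 : ℕ) : ℝ) else 0) := by
  rcases eq_or_ne j n with rfl | h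
  · simp
  · simp [h]

lemma sum_uu (n : ℕ) (hn : 4 ≤ n) :
    ∑ i ∈ range (n + 1), uu n i
      = ((Mc n : ℝ) - 2) * ((Mc n : ℝ) - 1) / ((Tc n : ℕ) : ℝ) := by
  have hM := Mc_ge n hn
  unfold uu
  rw [← sum_div]
  congr 1
  have h1 : ∀ i ∈ range (n + 1), (((Mc n - 2) * Aa n i : ℕ) : ℝ)
      = ((Mc n : ℝ) - 2) * ((Aa n i : ℕ) : ℝ) := by
    intro i _
    push_cast [Nat.cast_sub (by omega : 2 ≤ Mc n)]
    ring
  rw [sum_congr rfl h1, ← mul_sum, sum_Aa n (by omega)]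
  unfold Mc
  rfl

lemma sum_vv (n : ℕ) (hn : 4 ≤ n) :
    ∑ j ∈ range (n + 1), vv n j
      = ((Mc n : ℝ) * (Mc n : ℝ) + (Mc n : ℝ) - 2) / ((Tc n : ℕ) : ℝ) := by
  have hM := Mc_ge n hn
  unfold vv
  rw [← sum_div]
  congr 1
  rw [sum_congr rfl (fun j _ => ite_cast_split n j), sum_add_distrib, ← mul_sum,
    sum_shiftAa n (by omega)]
  rw [sum_ite_eq' (range (n + 1)) n (fun _ => ((Mc n - 2 : ℕ) : ℝ))]
  simp only [mem_range, lt_add_iff_pos_right, zero_lt_one, if_true]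
  push_cast [Nat.cast_sub (by omega : 2 ≤ Mc n)]
  ring

lemma sum_iuu (n : ℕ) (hn : 4 ≤ n) :
    ∑ i ∈ range (n + 1), (i : ℝ) * uu n i
      = ((Mc n : ℝ) - 2) * (∑ i ∈ range (n + 1), (i : ℝ) * ((Aa n i : ℕ) : ℝ))
        / ((Tc n : ℕ) : ℝ) := by
  have hM := Mc_ge n hn
  unfold uu
  have h1 : ∀ i ∈ range (n + 1), (i : ℝ) * ((((Mc n - 2) * Aa n i : ℕ) : ℝ) / ((Tc n : ℕ) : ℝ))
      = ((Mc n : ℝ) - 2) * ((i : ℝ) * ((Aa n i : ℕ) : ℝ)) / ((Tc n : ℕ) : ℝ) := by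
    intro i _
    push_cast [Nat.cast_sub (by omega : 2 ≤ Mc n)]
    ring
  rw [sum_congr rfl h1, ← sum_div, ← mul_sum]

lemma sum_ivv (n : ℕ) (hn : 4 ≤ n) :
    ∑ j ∈ range (n + 1), (j : ℝ) * vv n j
      = ((Mc n : ℝ) * ((∑ i ∈ range (n + 1), (i : ℝ) * ((Aa n i : ℕ) : ℝ))
          + (n : ℝ) + 1 - (Mc n : ℝ))
        + (n : ℝ) * ((Mc n : ℝ) - 2)) / ((Tc n : ℕ) : ℝ) := by
  have hM := Mc_ge n hn
  unfold vv
  have h1 : ∀ j ∈ range (n + 1), (j : ℝ)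
        * (((Mc n * Aa n (j + 1) + if j = n then Mc n - 2 else 0 : ℕ) : ℝ) / ((Tc n : ℕ) : ℝ))
      = ((Mc n : ℝ) * ((j : ℝ) * ((Aa n (j + 1) : ℕ) : ℝ))
          + (if j = n then (j : ℝ) * ((Mc n - 2 : ℕ) : ℝ) else 0)) / ((Tc n : ℕ) : ℝ) := by
    intro j _
    rw [ite_cast_split n j]
    rcases eq_or_ne j n with rfl | h
    · simp only [if_true]
      ring
    · simp only [h, if_false]
      ring
  rw [sum_congr rfl h1, ← sum_div]
  congr 1
  rw [sum_add_distrib, ← mul_sum, sum_ishiftAa n (by omega)]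
  rw [sum_ite_eq' (range (n + 1)) n (fun j => (j : ℝ) * ((Mc n - 2 : ℕ) : ℝ))]
  simp only [mem_range, lt_add_iff_pos_right, zero_lt_one, if_true]
  push_cast [Nat.cast_sub (by omega : 2 ≤ Mc n)]
  ring

lemma kernel_pt (n : ℕ) (hn : 4 ≤ n) (i : ℕ) (hi : i ≤ n) :
    uu n i - vv n (n - i)
      = (((Mc n : ℝ) - 1) * ((n.choose (i - 1) : ℝ) - (n.choose i : ℝ))
          - ((Aa n i + Ab n i : ℕ) : ℝ)
          - (if i = 0 then 2 * (Mc n : ℝ) - 2 else 0)) / ((Tc n : ℕ) : ℝ) := by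
  have hM := Mc_ge n hn
  rcases Nat.eq_zero_or_pos i with rfl | hip
  · unfold uu vv
    rw [Nat.sub_zero, if_pos rfl, if_pos rfl, Aa_top, Ab_zero, Aa_zero, div_sub_div_same]
    congr 1
    push_cast [Nat.cast_sub (by omega : 2 ≤ Mc n)]
    ring
  · unfold uu vv
    have hne : n - i ≠ n := by omega
    rw [if_neg hne]
    have e : n - i + 1 = n + 1 - i := by omega
    rw [e, symA n i (by omega) hi]
    rw [div_sub_div_same]
    congr 1
    rw [if_neg (by omega : i ≠ 0)]
    have hab := cast_sub_sub (n.choose (i - 1)) (n.choose i)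
    push_cast [Nat.cast_sub (by omega : 2 ≤ Mc n)]
    push_cast at hab
    unfold Aa Ab at *
    linear_combination ((Mc n : ℝ) - 1) * hab

lemma sum_kernel (n : ℕ) (hn : 4 ≤ n) (P Q : ℝ) (hPQ : P + Q = 1) :
    ∑ i ∈ range (n + 1), (uu n i - vv n (n - i)) * ff n P Q i
      = - (P - Q) / (Mc n : ℝ) := by
  have hM := Mc_ge n hn
  have hT := Tc_cast n hn
  have hTpos := Tc_pos n hn
  have h1 : ∀ i ∈ range (n + 1), (uu n i - vv n (n - i)) * ff n P Q i
      = ((((Mc n : ℝ) - 1) * ((n.choose (i - 1) : ℝ) * ff n P Q i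
            - (n.choose i : ℝ) * ff n P Q i)
          - ((Aa n i + Ab n i : ℕ) : ℝ) * ff n P Q i
          - (if i = 0 then (2 * (Mc n : ℝ) - 2) * ff n P Q i else 0)))
        / ((Tc n : ℕ) : ℝ) := by
    intro i hi
    rw [mem_range] at hi
    rw [kernel_pt n hn i (by omega)]
    rcases eq_or_ne i 0 with rfl | h0
    · rw [if_pos rfl, if_pos rfl]
      ring
    · rw [if_neg h0, if_neg h0]
      ring
  rw [sum_congr rfl h1, ← sum_div]
  rw [sum_sub_distrib, sum_sub_distrib, ← mul_sum, sum_sub_distrib]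
  rw [sum_binom_ff n P Q hPQ, sum_binom_shift_ff n P Q hPQ, sum_abs_ff n P Q]
  rw [sum_ite_eq' (range (n + 1)) 0 (fun i => (2 * (Mc n : ℝ) - 2) * ff n P Q i)]
  simp only [mem_range, Nat.zero_lt_succ, if_true]
  rw [ff_zero]
  rw [hT]
  have hM0 : (Mc n : ℝ) ≠ 0 := by positivity
  have hM1 : (Mc n : ℝ) - 1 ≠ 0 := by
    have : (4 : ℝ) ≤ (Mc n : ℝ) := by exact_mod_cast hM
    nlinarith
  field_simp
  ring
end Stmt1Helper


open Stmt1Helper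

theorem stmt_1 (k : ℕ) (hk : 5 ≤ k) :
    ∃ u v : Fin k → ℝ,
      (∀ i, 0 ≤ u i) ∧ (∀ i, 0 ≤ v i) ∧
      (∑ i, (u i + v i)) = 1 ∧
      (∀ δ : ℝ, -(1/2) ≤ δ → δ ≤ 1/2 →
        (1/2 - δ) * (∑ i, u i) + (1/2 + δ) * (∑ i, v i)
        + (∑ i : Fin k, u i * (-((1/2 + δ) ^ (i : ℕ)) * (1/2 - δ) ^ (k - (i : ℕ))
            + (1/2 - δ) ^ (i : ℕ) * (1/2 + δ) ^ (k - (i : ℕ))))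
        + (∑ i : Fin k, v i * (-((1/2 + δ) ^ ((i : ℕ) + 1)) * (1/2 - δ) ^ (k - 1 - (i : ℕ))
            + (1/2 - δ) ^ ((i : ℕ) + 1) * (1/2 + δ) ^ (k - 1 - (i : ℕ))))
        = 1/2) ∧
      (1 / ((k : ℝ) - 1)) * (∑ i : Fin k, ((i : ℕ) : ℝ) * (u i + v i))
        ≥ 1 - (((k : ℝ) - 2) / ((k : ℝ) - 1)) * (∑ i, u i) := by
  obtain ⟨n, rfl⟩ : ∃ n, k = n + 1 := ⟨k - 1, by omega⟩
  have hn : 4 ≤ n := by omega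
  have hM := Mc_ge n hn
  have hMr : (4 : ℝ) ≤ (Mc n : ℝ) := by exact_mod_cast hM
  have hT := Tc_cast n hn
  have hTpos := Tc_pos n hn
  refine ⟨fun i => uu n (i : ℕ), fun j => vv n (j : ℕ), fun i => uu_nonneg n i,
    fun j => vv_nonneg n j, ?_, ?_, ?_⟩
  · -- mass
    rw [Fin.sum_univ_eq_sum_range (fun i : ℕ => uu n i + vv n i) (n + 1)]
    rw [sum_add_distrib, sum_uu n hn, sum_vv n hn, hT]
    have hM0 : (Mc n : ℝ) ≠ 0 := by positivity
    have hM1 : (Mc n : ℝ) - 1 ≠ 0 := by nlinarith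
    field_simp
    ring
  · -- the δ identity
    intro δ _ _
    have hPQ : (1 / 2 + δ) + (1 / 2 - δ) = (1 : ℝ) := by ring
    rw [Fin.sum_univ_eq_sum_range (fun i : ℕ => uu n i) (n + 1)]
    rw [Fin.sum_univ_eq_sum_range (fun j : ℕ => vv n j) (n + 1)]
    rw [Fin.sum_univ_eq_sum_range (fun i : ℕ => uu n i *
      (-((1/2 + δ) ^ i) * (1/2 - δ) ^ (n + 1 - i)
        + (1/2 - δ) ^ i * (1/2 + δ) ^ (n + 1 - i))) (n + 1)]
    rw [Fin.sum_univ_eq_sum_range (fun j : ℕ => vv n j *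
      (-((1/2 + δ) ^ (j + 1)) * (1/2 - δ) ^ (n + 1 - 1 - j)
        + (1/2 - δ) ^ (j + 1) * (1/2 + δ) ^ (n + 1 - 1 - j))) (n + 1)]
    have hu : ∑ i ∈ range (n + 1), uu n i *
        (-((1/2 + δ) ^ i) * (1/2 - δ) ^ (n + 1 - i)
          + (1/2 - δ) ^ i * (1/2 + δ) ^ (n + 1 - i))
        = ∑ i ∈ range (n + 1), uu n i * ff n (1/2 + δ) (1/2 - δ) i := by
      apply sum_congr rfl
      intro i _
      unfold ff
      ring
    have hv : ∑ j ∈ range (n + 1), vv n j *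
        (-((1/2 + δ) ^ (j + 1)) * (1/2 - δ) ^ (n + 1 - 1 - j)
          + (1/2 - δ) ^ (j + 1) * (1/2 + δ) ^ (n + 1 - 1 - j))
        = ∑ i ∈ range (n + 1), vv n (n - i) * (- ff n (1/2 + δ) (1/2 - δ) i) := by
      rw [← sum_range_reflect]
      apply sum_congr rfl
      intro i hi
      rw [mem_range] at hi
      have e1 : n + 1 - 1 - i = n - i := by omega
      have e2 : n + 1 - 1 - (n - i) = i := by omega
      have e3 : n + 1 - i = (n - i) + 1 := by omega
      rw [e1, e2]
      unfold ff
      rw [e3]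
      ring
    rw [hu, hv]
    have hcomb : ∑ i ∈ range (n + 1), uu n i * ff n (1/2 + δ) (1/2 - δ) i
        + ∑ i ∈ range (n + 1), vv n (n - i) * (- ff n (1/2 + δ) (1/2 - δ) i)
        = ∑ i ∈ range (n + 1), (uu n i - vv n (n - i)) * ff n (1/2 + δ) (1/2 - δ) i := by
      rw [← sum_add_distrib]
      apply sum_congr rfl
      intro i _
      ring
    have hker := sum_kernel n hn (1/2 + δ) (1/2 - δ) hPQ
    rw [add_assoc, add_assoc, hcomb, hker, sum_uu n hn, sum_vv n hn, hT]
    have hM0 : (Mc n : ℝ) ≠ 0 := by positivity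
    have hM1 : (Mc n : ℝ) - 1 ≠ 0 := by nlinarith
    field_simp
    ring
  · -- the inequality
    rw [Fin.sum_univ_eq_sum_range (fun i : ℕ => ((i : ℝ)) * (uu n i + vv n i)) (n + 1)]
    rw [Fin.sum_univ_eq_sum_range (fun i : ℕ => uu n i) (n + 1)]
    have hW : ∑ i ∈ range (n + 1), (i : ℝ) * (uu n i + vv n i)
        = ∑ i ∈ range (n + 1), (i : ℝ) * uu n i + ∑ i ∈ range (n + 1), (i : ℝ) * vv n i := by
      rw [← sum_add_distrib]
      apply sum_congr rfl
      intro i _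
      ring
    rw [hW, sum_iuu n hn, sum_ivv n hn, sum_uu n hn]
    set S := ∑ i ∈ range (n + 1), (i : ℝ) * ((Aa n i : ℕ) : ℝ) with hSdef
    have h2S : 2 * S = 2 ^ n + ((n : ℝ) + 1) * (Mc n : ℝ) - 2 * ((n : ℝ) + 1) :=
      sum_iAa n (by omega)
    have hmid : (Mc n : ℝ) + 2 * (n : ℝ) ≤ 2 ^ n := by
      have h := mid_bound n hn
      have : ((n.choose (n / 2) + 2 * n : ℕ) : ℝ) ≤ ((2 ^ n : ℕ) : ℝ) := by exact_mod_cast h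
      push_cast at this
      exact this
    have hk1 : ((n + 1 : ℕ) : ℝ) - 1 = (n : ℝ) := by push_cast; ring
    have hk2 : ((n + 1 : ℕ) : ℝ) - 2 = (n : ℝ) - 1 := by push_cast; ring
    rw [hk1, hk2]
    have hn0 : (0 : ℝ) < (n : ℝ) := by
      have : (4:ℝ) ≤ (n:ℝ) := by exact_mod_cast hn
      linarith
    have hM0 : (Mc n : ℝ) ≠ 0 := by positivity
    have hM1 : (Mc n : ℝ) - 1 ≠ 0 := by nlinarith
    have hSval : S = (2 ^ n + ((n : ℝ) + 1) * (Mc n : ℝ) - 2 * ((n : ℝ) + 1)) / 2 := by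
      linarith
    rw [hSval, hT, ge_iff_le, ← sub_nonneg]
    have e : (0:ℝ) ≤ (2 ^ n - (Mc n : ℝ) - 2 * (n : ℝ)) / (2 * (n : ℝ) * (Mc n : ℝ)) := by
      apply div_nonneg
      · linarith
      · positivity
    convert e using 1
    field_simp
    ring
end

section
/- For every integer k ≥ 2 and all reals μ_1, μ′ ∈ [−1,1]: there exists a distribution D on {−1,1}^k with Σ_x D(x)·MON_k(x) = 1 whose marginal vector equals (μ_1, μ′, μ′, …, μ′) if and only if μ_1·(k−2) + μ′·(k−1) ≥ 1. -/
/-- sign(z) = 1 if z > 0 and 0 otherwise. -/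
noncomputable def Rsign (z : ℝ) : ℝ := if 0 < z then 1 else 0

/-- Encoding of {-1,1}: `true ↦ 1`, `false ↦ -1`. -/
def pm (b : Bool) : ℝ := if b then 1 else -1

/-- The monarchy function MON_k(x) = sign((k-2)·x_1 + x_2 + ⋯ + x_k). -/
noncomputable def MON (k : ℕ) (x : Fin k → Bool) : ℝ :=
  Rsign (∑ i : Fin k, (if (i : ℕ) = 0 then (k : ℝ) - 2 else 1) * pm (x i))

/-- `D` is a probability distribution on {-1,1}^k. -/
def IsDist {k : ℕ} (D : (Fin k → Bool) → ℝ) : Prop :=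
  (∀ x, 0 ≤ D x) ∧ (∑ x, D x) = 1

/-- The i-th marginal of `D`: Σ_x D(x)·x_i. -/
noncomputable def marg {k : ℕ} (D : (Fin k → Bool) → ℝ) (i : Fin k) : ℝ :=
  ∑ x, D x * pm (x i)

lemma sum_point {k : ℕ} (p : Fin k → Bool) (f : (Fin k → Bool) → ℝ) :
    ∑ x, (if x = p then (1:ℝ) else 0) * f x = f p := by
  rw [Finset.sum_congr rfl (fun x _ => by rw [ite_mul, one_mul, zero_mul])]
  rw [Finset.sum_ite_eq' Finset.univ p f]
  simp

lemma sum_fin_split {k : ℕ} (hk : 0 < k) (u v : ℝ) :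
    ∑ i : Fin k, (if (i:ℕ) = 0 then u else v) = u + ((k:ℝ)-1) * v := by
  have h : ∀ i : Fin k, (if (i:ℕ) = 0 then u else v)
      = v + (if i = (⟨0, hk⟩ : Fin k) then u - v else 0) := by
    intro i
    by_cases h : (i:ℕ) = 0
    · have hi : i = ⟨0,hk⟩ := Fin.ext h
      simp [h, hi]
    · have hi : i ≠ (⟨0,hk⟩ : Fin k) := by simp [Fin.ext_iff, h]
      simp [h, hi]
  rw [Finset.sum_congr rfl (fun i _ => h i)]
  rw [Finset.sum_add_distrib, Finset.sum_const, Finset.sum_ite_eq' Finset.univ]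
  simp [Finset.card_univ]
  ring

lemma sum_fin_split2 {k : ℕ} (hk : 0 < k) (j : Fin k) (hj : (j:ℕ) ≠ 0) (u v w : ℝ) :
    ∑ i : Fin k, (if (i:ℕ) = 0 then u else if i = j then v else w)
      = u + v + ((k:ℝ)-2) * w := by
  have h : ∀ i : Fin k, (if (i:ℕ) = 0 then u else if i = j then v else w)
      = w + ((if i = (⟨0, hk⟩ : Fin k) then u - w else 0) + (if i = j then v - w else 0)) := by
    intro i
    have hjne : j ≠ (⟨0,hk⟩ : Fin k) := by simp [Fin.ext_iff, hj]
    by_cases h0 : (i:ℕ) = 0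
    · have hi : i = ⟨0,hk⟩ := Fin.ext h0
      simp [h0, hi, hjne.symm]
    · have hi : i ≠ (⟨0,hk⟩ : Fin k) := by simp [Fin.ext_iff, h0]
      by_cases hij : i = j
      · simp [h0, hi, hij, hj, hjne]
      · simp [h0, hi, hij]
  rw [Finset.sum_congr rfl (fun i _ => h i)]
  rw [Finset.sum_add_distrib, Finset.sum_add_distrib, Finset.sum_const,
     Finset.sum_ite_eq' Finset.univ, Finset.sum_ite_eq' Finset.univ]
  simp [Finset.card_univ]
  ring

lemma key_sum {k : ℕ} (α β : ℝ) (c a : Fin k → Bool) (e : Fin k → Fin k → Bool)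
    (w : Fin k → ℝ) (f : (Fin k → Bool) → ℝ) :
    ∑ x, (α * (if x = c then (1:ℝ) else 0) + β * (if x = a then 1 else 0)
      + ∑ j : Fin k, w j * (if x = e j then 1 else 0)) * f x
    = α * f c + β * f a + ∑ j : Fin k, w j * f (e j) := by
  simp only [add_mul, Finset.sum_add_distrib]
  have t1 : ∑ x, (α * (if x = c then (1:ℝ) else 0)) * f x = α * f c := by
    simp only [mul_assoc]; rw [← Finset.mul_sum, sum_point]
  have t2 : ∑ x, (β * (if x = a then (1:ℝ) else 0)) * f x = β * f a := by
    simp only [mul_assoc]; rw [← Finset.mul_sum, sum_point]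
  have t3 : ∑ x, (∑ j : Fin k, w j * (if x = e j then (1:ℝ) else 0)) * f x
      = ∑ j : Fin k, w j * f (e j) := by
    simp only [Finset.sum_mul]
    rw [Finset.sum_comm]
    refine Finset.sum_congr rfl (fun j _ => ?_)
    simp only [mul_assoc]; rw [← Finset.mul_sum, sum_point]
  rw [t1, t2, t3]

lemma MON_a {k : ℕ} (hk : 2 ≤ k) : MON k (fun _ => true) = 1 := by
  have hkr : (2:ℝ) ≤ (k:ℝ) := by exact_mod_cast hk
  have hsum : ∑ i : Fin k, (if (i:ℕ) = 0 then (k:ℝ) - 2 else 1) * pm ((fun _ => true) i)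
      = (k:ℝ) - 2 + ((k:ℝ)-1) * 1 := by
    have h : ∀ i : Fin k, (if (i:ℕ) = 0 then (k:ℝ) - 2 else 1) * pm ((fun _ => true) i)
        = (if (i:ℕ) = 0 then (k:ℝ) - 2 else 1) := by intro i; simp [pm]
    rw [Finset.sum_congr rfl (fun i _ => h i)]
    exact sum_fin_split (by omega) _ _
  unfold MON Rsign
  rw [hsum, if_pos (by linarith)]

lemma MON_c {k : ℕ} (hk : 2 ≤ k) : MON k (fun i => decide ((i:ℕ) ≠ 0)) = 1 := by
  have hkr : (2:ℝ) ≤ (k:ℝ) := by exact_mod_cast hk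
  have hsum : ∑ i : Fin k, (if (i:ℕ) = 0 then (k:ℝ) - 2 else 1) * pm ((fun i => decide ((i:ℕ) ≠ 0)) i)
      = -((k:ℝ) - 2) + ((k:ℝ)-1) * 1 := by
    have h : ∀ i : Fin k, (if (i:ℕ) = 0 then (k:ℝ) - 2 else 1) * pm ((fun i => decide ((i:ℕ) ≠ 0)) i)
        = (if (i:ℕ) = 0 then -((k:ℝ) - 2) else 1) := by
      intro i
      by_cases h0 : (i:ℕ) = 0 <;> simp [pm, h0]
    rw [Finset.sum_congr rfl (fun i _ => h i)]
    exact sum_fin_split (by omega) _ _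
  unfold MON Rsign
  rw [hsum, if_pos (by linarith)]

lemma MON_e {k : ℕ} (hk : 2 ≤ k) (j : Fin k) (hj : (j:ℕ) ≠ 0) :
    MON k (fun i : Fin k => decide ((i:ℕ) = 0 ∨ i = j)) = 1 := by
  have hkr : (2:ℝ) ≤ (k:ℝ) := by exact_mod_cast hk
  have hsum : ∑ i : Fin k, (if (i:ℕ) = 0 then (k:ℝ) - 2 else 1)
        * pm ((fun i : Fin k => decide ((i:ℕ) = 0 ∨ i = j)) i)
      = ((k:ℝ) - 2) + 1 + ((k:ℝ)-2) * (-1) := by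
    have h : ∀ i : Fin k, (if (i:ℕ) = 0 then (k:ℝ) - 2 else 1)
          * pm ((fun i : Fin k => decide ((i:ℕ) = 0 ∨ i = j)) i)
        = (if (i:ℕ) = 0 then (k:ℝ) - 2 else if i = j then 1 else -1) := by
      intro i
      by_cases h0 : (i:ℕ) = 0
      · simp [pm, h0]
      · by_cases hij : i = j <;> simp [pm, h0, hij, Fin.ext_iff]
    rw [Finset.sum_congr rfl (fun i _ => h i)]
    exact sum_fin_split2 (by omega) j hj _ _ _
  unfold MON Rsign
  rw [hsum, if_pos (by linarith)]

theorem stmt_3 (k : ℕ) (hk : 2 ≤ k) (μ₁ μ' : ℝ)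
    (h1 : -1 ≤ μ₁) (h1' : μ₁ ≤ 1) (h2 : -1 ≤ μ') (h2' : μ' ≤ 1) :
    (∃ D : (Fin k → Bool) → ℝ, IsDist D ∧ (∑ x, D x * MON k x) = 1 ∧
      (∀ i : Fin k, marg D i = if (i : ℕ) = 0 then μ₁ else μ')) ↔
    μ₁ * ((k : ℝ) - 2) + μ' * ((k : ℝ) - 1) ≥ 1 := by
  have hkr : (2:ℝ) ≤ (k:ℝ) := by exact_mod_cast hk
  have hkpos : 0 < k := by omega
  constructor
  · rintro ⟨D, ⟨hDpos, hDsum⟩, hDmon, hDmarg⟩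
    have hMON01 : ∀ x : Fin k → Bool, MON k x = 0 ∨ MON k x = 1 := by
      intro x; unfold MON Rsign; split_ifs <;> simp
    have hzero : ∀ x : Fin k → Bool, D x * (1 - MON k x) = 0 := by
      have hsum0 : ∑ x, D x * (1 - MON k x) = 0 := by
        simp only [mul_sub, mul_one]
        rw [Finset.sum_sub_distrib, hDsum, hDmon]; norm_num
      have hnn : ∀ x ∈ (Finset.univ : Finset (Fin k → Bool)), (0:ℝ) ≤ D x * (1 - MON k x) := by
        intro x _
        apply mul_nonneg (hDpos x)
        rcases hMON01 x with h | h <;> rw [h] <;> norm_num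
      intro x
      exact (Finset.sum_eq_zero_iff_of_nonneg hnn).mp hsum0 x (Finset.mem_univ x)
    have hpoint : ∀ x : Fin k → Bool,
        D x ≤ D x * (∑ i : Fin k, (if (i:ℕ) = 0 then (k:ℝ) - 2 else 1) * pm (x i)) := by
      intro x
      by_cases hDx : D x = 0
      · simp [hDx]
      · have hDxpos : 0 < D x := lt_of_le_of_ne (hDpos x) (Ne.symm hDx)
        have hM : MON k x = 1 := by
          rcases mul_eq_zero.mp (hzero x) with h | h
          · exact absurd h hDx
          · linarith
        have hSpos : 0 < ∑ i : Fin k, (if (i:ℕ) = 0 then (k:ℝ) - 2 else 1) * pm (x i) := by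
          by_contra hle
          unfold MON Rsign at hM
          rw [if_neg hle] at hM
          norm_num at hM
        have hS1 : (1:ℝ) ≤ ∑ i : Fin k, (if (i:ℕ) = 0 then (k:ℝ) - 2 else 1) * pm (x i) := by
          set N : ℕ := ∑ i : Fin k, (if x i then 0 else (if (i:ℕ) = 0 then k - 2 else 1)) with hN
          have hcast : (∑ i : Fin k, (if (i:ℕ) = 0 then (k:ℝ) - 2 else 1) * pm (x i))
              = (2*(k:ℝ) - 3) - 2 * (N:ℝ) := by
            have hc2 : ((k - 2 : ℕ) : ℝ) = (k:ℝ) - 2 := by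
              push_cast [Nat.cast_sub hk]; ring
            have hterm : ∀ i : Fin k, (if (i:ℕ) = 0 then (k:ℝ) - 2 else 1) * pm (x i)
                = (if (i:ℕ) = 0 then (k:ℝ) - 2 else 1)
                  - 2 * (((if x i then 0 else (if (i:ℕ) = 0 then k - 2 else 1)) : ℕ) : ℝ) := by
              intro i
              by_cases hxi : x i <;> by_cases hi0 : (i:ℕ) = 0 <;>
                simp [pm, hxi, hi0, hc2] <;> ring
            rw [Finset.sum_congr rfl (fun i _ => hterm i), Finset.sum_sub_distrib]
            rw [sum_fin_split hkpos ((k:ℝ)-2) 1, ← Finset.mul_sum, ← Nat.cast_sum]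
            rw [← hN]
            ring
          rw [hcast] at hSpos ⊢
          have hnat : 2*N + 3 < 2*k := by
            have hr : ((2*N + 3 : ℕ) : ℝ) < ((2*k : ℕ) : ℝ) := by push_cast; linarith
            exact_mod_cast hr
          have hr2 : ((2*N + 4 : ℕ) : ℝ) ≤ ((2*k : ℕ) : ℝ) := by
            exact_mod_cast (by omega : 2*N+4 ≤ 2*k)
          push_cast at hr2
          linarith
        calc D x = D x * 1 := (mul_one _).symm
          _ ≤ _ := mul_le_mul_of_nonneg_left hS1 (le_of_lt hDxpos)
    have hswap : ∑ i : Fin k, (if (i:ℕ) = 0 then (k:ℝ) - 2 else 1) * marg D i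
        = ∑ x, D x * (∑ i : Fin k, (if (i:ℕ) = 0 then (k:ℝ) - 2 else 1) * pm (x i)) := by
      simp only [marg, Finset.mul_sum]
      rw [Finset.sum_comm]
      exact Finset.sum_congr rfl (fun x _ => Finset.sum_congr rfl (fun i _ => by ring))
    have hlhs : ∑ i : Fin k, (if (i:ℕ) = 0 then (k:ℝ) - 2 else 1) * marg D i
        = ((k:ℝ)-2) * μ₁ + ((k:ℝ)-1) * μ' := by
      have h : ∀ i : Fin k, (if (i:ℕ) = 0 then (k:ℝ) - 2 else 1) * marg D i
          = (if (i:ℕ) = 0 then ((k:ℝ)-2) * μ₁ else μ') := by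
        intro i; rw [hDmarg i]; by_cases h0 : (i:ℕ) = 0 <;> simp [h0]
      rw [Finset.sum_congr rfl (fun i _ => h i), sum_fin_split hkpos]
    have hfin : (1:ℝ) ≤ ∑ x, D x * (∑ i : Fin k, (if (i:ℕ) = 0 then (k:ℝ) - 2 else 1) * pm (x i)) := by
      have h0 := Finset.sum_le_sum (s := (Finset.univ : Finset (Fin k → Bool))) (fun x _ => hpoint x)
      rwa [hDsum] at h0
    rw [← hswap, hlhs] at hfin
    linarith
  · intro hge
    have hk1 : (0:ℝ) < (k:ℝ) - 1 := by linarith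
    have hne : ((k:ℝ) - 1) ≠ 0 := ne_of_gt hk1
    set α := (1 - μ₁)/2 with hα
    set γ := (1-μ') * ((k:ℝ)-1) / (2*((k:ℝ)-2)) with hγ
    set β := (1+μ₁)/2 - γ with hβ
    have hα0 : 0 ≤ α := by rw [hα]; linarith
    have hγ0 : 0 ≤ γ := by
      rw [hγ]
      apply div_nonneg (mul_nonneg (by linarith) (by linarith)) (by linarith)
    obtain ⟨hgk, hβ0⟩ : γ * (2*((k:ℝ)-2)) = (1-μ') * ((k:ℝ)-1) ∧ 0 ≤ β := by
      rcases eq_or_lt_of_le hkr with heq | hlt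
      · have hke : (k:ℝ) = 2 := heq.symm
        have hγz : γ = 0 := by rw [hγ, hke]; simp
        rw [hke] at hge
        norm_num at hge
        have hμ : μ' = 1 := le_antisymm h2' hge
        constructor
        · rw [hγz, hke, hμ]; ring
        · rw [hβ, hγz]; linarith
      · have h2pos : (0:ℝ) < (k:ℝ) - 2 := by linarith
        have hgk : γ * (2*((k:ℝ)-2)) = (1-μ') * ((k:ℝ)-1) := by
          rw [hγ]; field_simp
        refine ⟨hgk, ?_⟩
        rw [hβ]
        nlinarith [hgk, hge]
    clear_value γ
    set w : Fin k → ℝ := fun j => if (j:ℕ) = 0 then 0 else γ / ((k:ℝ)-1) with hw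
    have hwsum : ∑ j : Fin k, w j = γ := by
      rw [hw, sum_fin_split hkpos 0 (γ / ((k:ℝ)-1))]
      field_simp
      ring
    have hdiv : ((k:ℝ)-1) * (γ/((k:ℝ)-1)) = γ := by field_simp
    refine ⟨fun x => α * (if x = (fun i : Fin k => decide ((i:ℕ) ≠ 0)) then 1 else 0)
        + β * (if x = (fun _ : Fin k => true) then 1 else 0)
        + ∑ j : Fin k, w j * (if x = (fun i : Fin k => decide ((i:ℕ) = 0 ∨ i = j)) then 1 else 0),
      ⟨?_, ?_⟩, ?_, ?_⟩
    · intro x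
      refine add_nonneg (add_nonneg ?_ ?_) (Finset.sum_nonneg (fun j _ => ?_))
      · apply mul_nonneg hα0; split_ifs <;> norm_num
      · apply mul_nonneg hβ0; split_ifs <;> norm_num
      · refine mul_nonneg ?_ (by split_ifs <;> norm_num)
        rw [hw]
        dsimp only
        split_ifs
        · exact le_refl 0
        · positivity
    · have h := key_sum α β (fun i : Fin k => decide ((i:ℕ) ≠ 0)) (fun _ : Fin k => true)
        (fun j (i : Fin k) => decide ((i:ℕ) = 0 ∨ i = j)) w (fun _ => (1:ℝ))
      simp only [mul_one] at h
      rw [h, hwsum, hβ, hα]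
      ring
    · have h := key_sum α β (fun i : Fin k => decide ((i:ℕ) ≠ 0)) (fun _ : Fin k => true)
        (fun j (i : Fin k) => decide ((i:ℕ) = 0 ∨ i = j)) w (MON k)
      rw [h, MON_c hk, MON_a hk]
      have he : ∑ j : Fin k, w j * MON k (fun i : Fin k => decide ((i:ℕ) = 0 ∨ i = j))
          = ∑ j : Fin k, w j := by
        refine Finset.sum_congr rfl (fun j _ => ?_)
        by_cases hj0 : (j:ℕ) = 0
        · rw [hw]; dsimp only; rw [if_pos hj0]; ring
        · rw [MON_e hk j hj0, mul_one]
      rw [he, hwsum, hβ, hα]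
      ring
    · intro i
      have h := key_sum α β (fun i : Fin k => decide ((i:ℕ) ≠ 0)) (fun _ : Fin k => true)
        (fun j (i : Fin k) => decide ((i:ℕ) = 0 ∨ i = j)) w (fun x => pm (x i))
      simp only [marg]
      rw [h]
      by_cases hi0 : (i:ℕ) = 0
      · rw [if_pos hi0]
        have hc : pm (decide ((i:ℕ) ≠ 0)) = -1 := by simp [pm, hi0]
        have ha : pm true = 1 := by simp [pm]
        have hesum : ∑ j : Fin k, w j * pm (decide ((i:ℕ) = 0 ∨ i = j)) = γ := by
          rw [← hwsum]
          refine Finset.sum_congr rfl (fun j _ => ?_)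
          simp [pm, hi0]
        rw [hc, ha, hesum, hβ, hα]
        ring
      · rw [if_neg hi0]
        have hc : pm (decide ((i:ℕ) ≠ 0)) = 1 := by simp [pm, hi0]
        have ha : pm true = 1 := by simp [pm]
        have hterm : ∀ j : Fin k, w j * pm (decide ((i:ℕ) = 0 ∨ i = j))
            = (if (j:ℕ) = 0 then 0 else if j = i then γ/((k:ℝ)-1) else -(γ/((k:ℝ)-1))) := by
          intro j
          rw [hw]
          dsimp only
          by_cases hj0 : (j:ℕ) = 0
          · rw [if_pos hj0, if_pos hj0]; ring
          · rw [if_neg hj0, if_neg hj0]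
            by_cases hij : j = i
            · rw [if_pos hij]
              simp [pm, hij.symm]
            · rw [if_neg hij]
              have hij' : ¬ i = j := fun hh => hij hh.symm
              simp [pm, hi0, hij']
        have hesum : ∑ j : Fin k, w j * pm (decide ((i:ℕ) = 0 ∨ i = j))
            = 0 + γ/((k:ℝ)-1) + ((k:ℝ)-2) * (-(γ/((k:ℝ)-1))) := by
          rw [Finset.sum_congr rfl (fun j _ => hterm j)]
          exact sum_fin_split2 hkpos i hi0 _ _ _
        rw [hesum, hc, ha, hβ, hα]
        have hs2 : (γ/((k:ℝ)-1)) * (2*((k:ℝ)-2)) = 1 - μ' := by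
          rw [div_mul_eq_mul_div, hgk, mul_div_assoc, div_self hne, mul_one]
        linear_combination hdiv - hs2
end

section
/- For every integer k ≥ 2 and all reals γ, β: K^Y_γ(MON_k) ∩ K^N_β(MON_k) = ∅ if and only if K̃^Y_γ(MON_k) ∩ K̃^N_β(MON_k) = ∅, where K̃^Y_γ(MON_k) = {(μ_1,μ′) ∈ ℝ² : (μ_1,μ′,μ′,…,μ′) ∈ K^Y_γ(MON_k)} and K̃^N_β(MON_k) = {(μ_1,μ′) ∈ ℝ² : (μ_1,μ′,μ′,…,μ′) ∈ K^N_β(MON_k)}. -/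
/-- E_{a ~ Bern(p)^k}[g(b ⊙ a)], where `a i = true` means a_i = 1 (prob. p). -/
noncomputable def bern {k : ℕ} (p : ℝ) (b : Fin k → Bool) (g : (Fin k → Bool) → ℝ) : ℝ :=
  ∑ a : Fin k → Bool, (∏ i, if a i then p else 1 - p) * g (fun i => b i == a i)

/-- K^Y_γ(MON_k): marginal vectors of distributions supported (in expectation ≥ γ)
on satisfying assignments of MON_k. -/
def KY (k : ℕ) (γ : ℝ) : Set (Fin k → ℝ) :=
  {μ | ∃ D : (Fin k → Bool) → ℝ, IsDist D ∧ γ ≤ (∑ x, D x * MON k x) ∧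
    ∀ i, μ i = marg D i}

/-- K^N_β(MON_k). -/
def KN (k : ℕ) (β : ℝ) : Set (Fin k → ℝ) :=
  {μ | ∃ D : (Fin k → Bool) → ℝ, IsDist D ∧
    (∀ p : ℝ, 0 ≤ p → p ≤ 1 → (∑ b, D b * bern p b (MON k)) ≤ β) ∧
    ∀ i, μ i = marg D i}

namespace Stmt4Aux
open Finset

variable {k : ℕ}

/-- permutations preserving "index value 0" -/
def memS (π : Equiv.Perm (Fin k)) : Prop := ∀ i : Fin k, ((π i : ℕ) = 0 ↔ (i : ℕ) = 0)

noncomputable def S (k : ℕ) : Finset (Equiv.Perm (Fin k)) :=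
  Finset.univ.filter fun π => ∀ i : Fin k, ((π i : ℕ) = 0 ↔ (i : ℕ) = 0)

lemma mem_S {π : Equiv.Perm (Fin k)} : π ∈ S k ↔ memS π := by
  simp [S, memS]

lemma one_mem_S : (1 : Equiv.Perm (Fin k)) ∈ S k := by simp [S]

lemma card_S_pos : 0 < (S k).card := Finset.card_pos.2 ⟨1, one_mem_S⟩

lemma memS_symm {π : Equiv.Perm (Fin k)} (h : memS π) : memS π.symm := by
  intro i
  constructor
  · intro h0
    have := (h (π.symm i)).2 h0
    rwa [Equiv.apply_symm_apply] at this
  · intro h0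
    have := (h (π.symm i)).1 ?_
    · exact this
    · rwa [Equiv.apply_symm_apply]

lemma MON_comp (π : Equiv.Perm (Fin k)) (hπ : memS π) (x : Fin k → Bool) :
    MON k (fun i => x (π i)) = MON k x := by
  unfold MON
  congr 1
  refine Fintype.sum_equiv π _ _ (fun i => ?_)
  rcases eq_or_ne ((i : ℕ)) 0 with h | h
  · rw [if_pos h, if_pos ((hπ i).2 h)]
  · rw [if_neg h, if_neg (fun hc => h ((hπ i).1 hc))]

lemma sum_perm (π : Equiv.Perm (Fin k)) (F : (Fin k → Bool) → ℝ) :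
    ∑ x : Fin k → Bool, F (fun i => x (π i)) = ∑ x, F x := by
  refine Fintype.sum_equiv (Equiv.arrowCongr π.symm (Equiv.refl Bool)) _ _ (fun x => ?_)
  rfl

lemma bern_perm (π : Equiv.Perm (Fin k)) (hπ : memS π) (p : ℝ) (b : Fin k → Bool) :
    bern p (fun i => b (π i)) (MON k) = bern p b (MON k) := by
  unfold bern
  calc ∑ a : Fin k → Bool, (∏ i, if a i then p else 1 - p) * MON k (fun i => b (π i) == a i)
      = ∑ a : Fin k → Bool, (∏ i, if a (π i) then p else 1 - p) *
          MON k (fun i => b (π i) == a (π i)) := by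
        exact (sum_perm π (fun a => (∏ i, if a i then p else 1 - p) *
          MON k (fun i => b (π i) == a i))).symm
    _ = ∑ a : Fin k → Bool, (∏ i, if a i then p else 1 - p) * MON k (fun i => b i == a i) := by
        refine Finset.sum_congr rfl (fun a _ => ?_)
        congr 1
        · exact Fintype.prod_equiv π _ _ (fun i => rfl)
        · exact MON_comp π hπ (fun i => b i == a i)

end Stmt4Aux

namespace Stmt4Aux

noncomputable def symmD (k : ℕ) (D : (Fin k → Bool) → ℝ) : (Fin k → Bool) → ℝ :=
  fun x => ((S k).card : ℝ)⁻¹ * ∑ π ∈ S k, D (fun i => x (π i))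

lemma card_S_ne : ((S k).card : ℝ) ≠ 0 :=
  Nat.cast_ne_zero.2 card_S_pos.ne'

lemma symm_exp (D : (Fin k → Bool) → ℝ) (G : (Fin k → Bool) → ℝ)
    (hG : ∀ π : Equiv.Perm (Fin k), memS π → ∀ x, G (fun i => x (π i)) = G x) :
    ∑ x, symmD k D x * G x = ∑ x, D x * G x := by
  unfold symmD
  have h1 : ∀ x : Fin k → Bool,
      (((S k).card : ℝ)⁻¹ * ∑ π ∈ S k, D (fun i => x (π i))) * G x
      = ((S k).card : ℝ)⁻¹ * ∑ π ∈ S k, D (fun i => x (π i)) * G x := by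
    intro x; rw [mul_assoc, Finset.sum_mul]
  simp_rw [h1]
  rw [← Finset.mul_sum, Finset.sum_comm]
  have h2 : ∀ π ∈ S k, (∑ x : Fin k → Bool, D (fun i => x (π i)) * G x)
      = ∑ x, D x * G x := by
    intro π hπ
    have hm := mem_S.1 hπ
    calc ∑ x : Fin k → Bool, D (fun i => x (π i)) * G x
        = ∑ x : Fin k → Bool, D (fun i => x (π i)) * G (fun i => x (π i)) := by
          refine Finset.sum_congr rfl (fun x _ => ?_)
          rw [hG π hm x]
      _ = ∑ x, D x * G x := sum_perm π (fun x => D x * G x)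
  rw [Finset.sum_congr rfl h2, Finset.sum_const, nsmul_eq_mul, ← mul_assoc,
    inv_mul_cancel₀ card_S_ne, one_mul]

lemma symm_isDist {D : (Fin k → Bool) → ℝ} (hD : IsDist D) : IsDist (symmD k D) := by
  constructor
  · intro x
    refine mul_nonneg (by positivity) (Finset.sum_nonneg fun π _ => hD.1 _)
  · have := symm_exp D (fun _ => 1) (fun _ _ _ => rfl)
    simpa [hD.2] using this

lemma symm_marg (D : (Fin k → Bool) → ℝ) (i : Fin k) :
    marg (symmD k D) i = ((S k).card : ℝ)⁻¹ * ∑ π ∈ S k, marg D (π.symm i) := by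
  unfold marg symmD
  have h1 : ∀ x : Fin k → Bool,
      (((S k).card : ℝ)⁻¹ * ∑ π ∈ S k, D (fun j => x (π j))) * pm (x i)
      = ((S k).card : ℝ)⁻¹ * ∑ π ∈ S k, D (fun j => x (π j)) * pm (x i) := by
    intro x; rw [mul_assoc, Finset.sum_mul]
  simp_rw [h1]
  rw [← Finset.mul_sum, Finset.sum_comm]
  congr 1
  refine Finset.sum_congr rfl (fun π _ => ?_)
  have := sum_perm π (fun x => D x * pm (x (π.symm i)))
  simp only [Equiv.apply_symm_apply] at this
  exact this

/-- key counting-free symmetry: sums over S of μ(π⁻¹ i) agree for nonzero i, j. -/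
lemma nu_eq (μ : Fin k → ℝ) {i j : Fin k} (hi : (i : ℕ) ≠ 0) (hj : (j : ℕ) ≠ 0) :
    ∑ π ∈ S k, μ (π.symm i) = ∑ π ∈ S k, μ (π.symm j) := by
  have hswap : ∀ y : Fin k, ((Equiv.swap i j y : ℕ) = 0 ↔ (y : ℕ) = 0) := by
    intro y
    rcases eq_or_ne y i with rfl | hyi
    · simp [Equiv.swap_apply_left, hi, hj]
    rcases eq_or_ne y j with rfl | hyj
    · simp [Equiv.swap_apply_right, hi, hj]
    · rw [Equiv.swap_apply_of_ne_of_ne hyi hyj]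
  refine Finset.sum_nbij' (fun π => π.trans (Equiv.swap i j))
    (fun π => π.trans (Equiv.swap i j)) ?_ ?_ ?_ ?_ ?_
  · intro π hπ
    rw [mem_S] at hπ ⊢
    intro x
    simp only [Equiv.trans_apply]
    rw [hswap, hπ]
  · intro π hπ
    rw [mem_S] at hπ ⊢
    intro x
    simp only [Equiv.trans_apply]
    rw [hswap, hπ]
  · intro π _
    ext x
    simp [Equiv.trans_apply, Equiv.swap_apply_self]
  · intro π _
    ext x
    simp [Equiv.trans_apply, Equiv.swap_apply_self]
  · intro π _
    congr 1
    simp [Equiv.symm_trans_apply]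

end Stmt4Aux

theorem stmt_4 (k : ℕ) (hk : 2 ≤ k) (γ β : ℝ) :
    (KY k γ ∩ KN k β = ∅) ↔
    (({q : ℝ × ℝ | (fun i : Fin k => if (i : ℕ) = 0 then q.1 else q.2) ∈ KY k γ} ∩
      {q : ℝ × ℝ | (fun i : Fin k => if (i : ℕ) = 0 then q.1 else q.2) ∈ KN k β}) = ∅) := by
  constructor
  · intro h
    rw [Set.eq_empty_iff_forall_notMem] at h ⊢
    rintro q ⟨hq1, hq2⟩
    exact h _ ⟨hq1, hq2⟩
  · intro h
    rw [Set.eq_empty_iff_forall_notMem] at h ⊢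
    rintro μ ⟨⟨D1, hD1, hγ, hm1⟩, ⟨D2, hD2, hβ, hm2⟩⟩
    have hz : (0 : ℕ) < k := by omega
    have ho : (1 : ℕ) < k := by omega
    set c : ℝ := ((Stmt4Aux.S k).card : ℝ)⁻¹ with hc
    set ν : Fin k → ℝ := fun i => c * ∑ π ∈ Stmt4Aux.S k, μ (π.symm i) with hν
    -- each symmetrized distribution has marginal vector ν
    have margsym : ∀ D : (Fin k → Bool) → ℝ, (∀ i, μ i = marg D i) →
        ∀ i : Fin k, marg (Stmt4Aux.symmD k D) i = ν i := by
      intro D hm i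
      rw [Stmt4Aux.symm_marg, hν]
      congr 1
      exact Finset.sum_congr rfl fun π _ => (hm _).symm
    have key : ∀ i : Fin k,
        (if (i : ℕ) = 0 then ν ⟨0, hz⟩ else ν ⟨1, ho⟩) = ν i := by
      intro i
      split_ifs with hi
      · rw [show i = ⟨0, hz⟩ from Fin.ext hi]
      · rw [hν]
        simp only
        congr 1
        exact Stmt4Aux.nu_eq μ (by simp) hi
    refine h (ν ⟨0, hz⟩, ν ⟨1, ho⟩) ⟨?_, ?_⟩
    · refine ⟨Stmt4Aux.symmD k D1, Stmt4Aux.symm_isDist hD1, ?_, ?_⟩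
      · rw [Stmt4Aux.symm_exp D1 (MON k) (fun π hπ x => Stmt4Aux.MON_comp π hπ x)]
        exact hγ
      · intro i
        rw [margsym D1 hm1 i]
        exact key i
    · refine ⟨Stmt4Aux.symmD k D2, Stmt4Aux.symm_isDist hD2, ?_, ?_⟩
      · intro p hp0 hp1
        rw [Stmt4Aux.symm_exp D2 (fun b => bern p b (MON k))
          (fun π hπ x => Stmt4Aux.bern_perm π hπ p x)]
        exact hβ p hp0 hp1
      · intro i
        rw [margsym D2 hm2 i]
        exact key i
end

section
/- Let u_0,u_1,u_2,u_3,v_0,v_1,v_2,v_3 be nonnegative reals satisfying the system: u_0 + v_0 + v_1 + v_2 = 1/2; −3u_0 + 2u_1 + u_2 − v_1 − 2v_2 + 3v_3 = 0; 6u_0 − 3u_1 + 3u_3 − 3v_0 + 3v_2 − 6v_3 = 0; −4u_0 + 2u_1 − 2u_3 + 2v_0 − 2v_2 + 4v_3 = 0; and Σ_{i=0}^{3}(u_i + v_i) = 1. Then 2μ_1 + 3μ′ ≤ 2/3, where μ_1 = Σ_{i=0}^{3}(u_i − v_i) and μ′ = Σ_{i=0}^{3}((2i/3) − 1)·(u_i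 + v_i). -/
theorem stmt_5 (u v : Fin 4 → ℝ)
    (hu : ∀ i, 0 ≤ u i) (hv : ∀ i, 0 ≤ v i)
    (e1 : u 0 + v 0 + v 1 + v 2 = 1/2)
    (e2 : -3 * u 0 + 2 * u 1 + u 2 - v 1 - 2 * v 2 + 3 * v 3 = 0)
    (e3 : 6 * u 0 - 3 * u 1 + 3 * u 3 - 3 * v 0 + 3 * v 2 - 6 * v 3 = 0)
    (e4 : -4 * u 0 + 2 * u 1 - 2 * u 3 + 2 * v 0 - 2 * v 2 + 4 * v 3 = 0)
    (e5 : (∑ i, (u i + v i)) = 1) :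
    2 * (∑ i, (u i - v i))
      + 3 * (∑ i : Fin 4, ((2 * ((i : ℕ) : ℝ) / 3) - 1) * (u i + v i)) ≤ 2/3 := by
  have h3 : (((3:Fin 4)):ℕ) = 3 := rfl
  simp [Fin.sum_univ_four, h3] at *
  have := hu 0; have := hu 1; have := hu 2; have := hu 3
  have := hv 0; have := hv 1; have := hv 2; have := hv 3
  linarith
end

section
/- The sets K^Y_1(MON_4) and K^N_{1/2}(MON_4) are disjoint: there is no vector μ ∈ [−1,1]^4 that is simultaneously the marginal vector of a distribution D_Y on {−1,1}^4 with Σ_x D_Y(x)·MON_4(x) = 1 and the marginal vector of a distribution D_N on {−1,1}^4 such that for every p ∈ [0,1], Σ_b D_N(b)·E_{a∼Bern(p)^4}[MON_4(b⊙a)] ≤ 1/2. -/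
lemma MON_eq (x : Fin 4 → Bool) :
    MON 4 x = if (x 0 && (x 1 || x 2 || x 3)) || (x 1 && x 2 && x 3) then 1 else 0 := by
  cases h0 : x 0 <;> cases h1 : x 1 <;> cases h2 : x 2 <;> cases h3 : x 3 <;>
    simp [MON, Rsign, pm, Fin.sum_univ_four, h0, h1, h2, h3,
      show ((1:Fin 4):ℕ) = 1 from rfl, show ((2:Fin 4):ℕ) = 2 from rfl,
      show ((3:Fin 4):ℕ) = 3 from rfl] <;> norm_num

def e4b : (Fin 4 → Bool) ≃ Bool × Bool × Bool × Bool :=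
  ⟨fun x => (x 0, x 1, x 2, x 3), fun p => ![p.1, p.2.1, p.2.2.1, p.2.2.2],
    fun x => by funext i; fin_cases i <;> rfl, fun p => rfl⟩

lemma sum4 (f : (Fin 4 → Bool) → ℝ) :
    ∑ x, f x = ∑ a : Bool, ∑ b : Bool, ∑ c : Bool, ∑ d : Bool, f ![a,b,c,d] := by
  rw [Fintype.sum_equiv e4b f (fun p => f ![p.1, p.2.1, p.2.2.1, p.2.2.2])
    (fun x => by congr 1; funext i; fin_cases i <;> rfl)]
  simp only [Fintype.sum_prod_type]

/-- S(b) = 3β₀+β₁+β₂+β₃. -/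
noncomputable def Sf (b : Fin 4 → Bool) : ℝ := 3 * pm (b 0) + pm (b 1) + pm (b 2) + pm (b 3)

/-- C(b) = β₁β₂β₃ − β₀β₁β₂ − β₀β₁β₃ − β₀β₂β₃. -/
noncomputable def Cf (b : Fin 4 → Bool) : ℝ :=
  pm (b 1) * pm (b 2) * pm (b 3) - pm (b 0) * pm (b 1) * pm (b 2)
    - pm (b 0) * pm (b 1) * pm (b 3) - pm (b 0) * pm (b 2) * pm (b 3)

lemma bern_eq (p : ℝ) (b : Fin 4 → Bool) :
    bern p b (MON 4)
      = 1/2 + ((2*p-1)/8) * Sf b + ((2*p-1)^3/8) * Cf b := by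
  rw [bern, sum4]
  simp only [Fintype.sum_bool, MON_eq, Fin.prod_univ_four, Matrix.cons_val_zero,
    Matrix.cons_val_one, Matrix.head_cons, Matrix.cons_val_two, Matrix.tail_cons,
    Matrix.cons_val_three]
  cases h0 : b 0 <;> cases h1 : b 1 <;> cases h2 : b 2 <;> cases h3 : b 3 <;>
    simp [Sf, Cf, pm, h0, h1, h2, h3] <;> ring

lemma ptY (x : Fin 4 → Bool) :
    7 * MON 4 x - 6 ≤ 2 * pm (x 0) + pm (x 1) + pm (x 2) + pm (x 3) := by
  rw [MON_eq]
  cases h0 : x 0 <;> cases h1 : x 1 <;> cases h2 : x 2 <;> cases h3 : x 3 <;>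
    simp [pm, h0, h1, h2, h3] <;> norm_num

lemma ptC (b : Fin 4 → Bool) :
    -12 + 4 * (-pm (b 0) + pm (b 1) + pm (b 2) + pm (b 3)) ≤ Cf b := by
  cases h0 : b 0 <;> cases h1 : b 1 <;> cases h2 : b 2 <;> cases h3 : b 3 <;>
    simp [Cf, pm, h0, h1, h2, h3] <;> norm_num

theorem stmt_6 :
    ¬ ∃ μ : Fin 4 → ℝ,
      (∀ i, -1 ≤ μ i ∧ μ i ≤ 1) ∧
      (∃ DY : (Fin 4 → Bool) → ℝ, IsDist DY ∧
        (∑ x, DY x * MON 4 x) = 1 ∧ (∀ i, μ i = marg DY i)) ∧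
      (∃ DN : (Fin 4 → Bool) → ℝ, IsDist DN ∧
        (∀ p : ℝ, 0 ≤ p → p ≤ 1 → (∑ b, DN b * bern p b (MON 4)) ≤ 1/2) ∧
        (∀ i, μ i = marg DN i)) := by
  rintro ⟨μ, hμ, ⟨DY, ⟨hYpos, hYsum⟩, hY1, hYm⟩, ⟨DN, ⟨hNpos, hNsum⟩, hNle, hNm⟩⟩
  -- Y side: 1 ≤ 2μ₀+μ₁+μ₂+μ₃
  have key1 : (1:ℝ) ≤ 2 * μ 0 + μ 1 + μ 2 + μ 3 := by
    have e1 : 2 * μ 0 + μ 1 + μ 2 + μ 3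
        = ∑ x, DY x * (2 * pm (x 0) + pm (x 1) + pm (x 2) + pm (x 3)) := by
      rw [hYm 0, hYm 1, hYm 2, hYm 3, marg, marg, marg, marg, Finset.mul_sum,
        ← Finset.sum_add_distrib, ← Finset.sum_add_distrib, ← Finset.sum_add_distrib]
      exact Finset.sum_congr rfl fun x _ => by ring
    have e2 : ∑ x, DY x * (7 * MON 4 x - 6)
        = 7 * (∑ x, DY x * MON 4 x) - 6 * (∑ x, DY x) := by
      rw [Finset.mul_sum, Finset.mul_sum, ← Finset.sum_sub_distrib]
      exact Finset.sum_congr rfl fun x _ => by ring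
    have e3 : ∑ x, DY x * (7 * MON 4 x - 6)
        ≤ ∑ x, DY x * (2 * pm (x 0) + pm (x 1) + pm (x 2) + pm (x 3)) :=
      Finset.sum_le_sum fun x _ => mul_le_mul_of_nonneg_left (ptY x) (hYpos x)
    rw [e1]
    calc (1:ℝ) = 7 * (∑ x, DY x * MON 4 x) - 6 * (∑ x, DY x) := by
          rw [hY1, hYsum]; norm_num
      _ = ∑ x, DY x * (7 * MON 4 x - 6) := e2.symm
      _ ≤ _ := e3
  -- N side identity
  set A : ℝ := 3 * μ 0 + μ 1 + μ 2 + μ 3 with hA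
  set C : ℝ := ∑ b, DN b * Cf b with hC
  have eN : ∀ p : ℝ, ∑ b, DN b * bern p b (MON 4)
      = 1/2 + ((2*p-1)/8) * A + ((2*p-1)^3/8) * C := by
    intro p
    have : ∑ b, DN b * bern p b (MON 4)
        = (1/2) * (∑ b, DN b)
          + ((2*p-1)/8) * (3 * marg DN 0 + marg DN 1 + marg DN 2 + marg DN 3)
          + ((2*p-1)^3/8) * (∑ b, DN b * Cf b) := by
      simp only [bern_eq, marg, Finset.mul_sum, ← Finset.sum_add_distrib]
      exact Finset.sum_congr rfl fun b _ => by simp only [Sf]; ring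
    rw [this, hNsum, hA, hNm 0, hNm 1, hNm 2, hNm 3, hC]
    ring
  -- evaluate at p = 1, 0, 3/4, 1/4 : forces A = 0 and C = 0
  have h1 := hNle 1 (by norm_num) (by norm_num)
  have h0 := hNle 0 (by norm_num) (by norm_num)
  have h34 := hNle (3/4) (by norm_num) (by norm_num)
  have h14 := hNle (1/4) (by norm_num) (by norm_num)
  rw [eN] at h1 h0 h34 h14
  norm_num at h1 h0 h34 h14
  have hAC1 : A + C ≤ 0 := by nlinarith [h1]
  have hAC0 : 0 ≤ A + C := by nlinarith [h0]
  have hAC3 : A/16 + C/64 ≤ 0 := by nlinarith [h34]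
  have hAC4 : 0 ≤ A/16 + C/64 := by nlinarith [h14]
  have hA0 : A = 0 := by linarith
  have hC0 : C = 0 := by linarith
  -- from A = 0 and key1 and |μ| ≤ 1 : μ = (-1,1,1,1)
  have hm0 := hμ 0
  have hm1 := hμ 1
  have hm2 := hμ 2
  have hm3 := hμ 3
  -- C ≥ -12 + 4(-μ₀+μ₁+μ₂+μ₃)
  have keyC : -12 + 4 * (-μ 0 + μ 1 + μ 2 + μ 3) ≤ C := by
    have e1 : ∑ b, DN b * (-12 + 4 * (-pm (b 0) + pm (b 1) + pm (b 2) + pm (b 3)))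
        = -12 * (∑ b, DN b)
          + 4 * (-(marg DN 0) + marg DN 1 + marg DN 2 + marg DN 3) := by
      simp only [marg, Finset.mul_sum, ← Finset.sum_add_distrib, ← Finset.sum_neg_distrib]
      exact Finset.sum_congr rfl fun b _ => by ring
    have e2 : ∑ b, DN b * (-12 + 4 * (-pm (b 0) + pm (b 1) + pm (b 2) + pm (b 3)))
        ≤ ∑ b, DN b * Cf b :=
      Finset.sum_le_sum fun b _ => mul_le_mul_of_nonneg_left (ptC b) (hNpos b)
    calc -12 + 4 * (-μ 0 + μ 1 + μ 2 + μ 3)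
        = -12 * (∑ b, DN b)
          + 4 * (-(marg DN 0) + marg DN 1 + marg DN 2 + marg DN 3) := by
          rw [hNsum, ← hNm 0, ← hNm 1, ← hNm 2, ← hNm 3]; ring
      _ = _ := e1.symm
      _ ≤ C := e2
  linarith
end

section
/- For all integers j ≥ 2 and k ≥ 2j³ + 4j² + j with k + j even: 2^{k−2} − Σ_{i=0}^{(k−j)/2 − 1} C(k−1, i) < (j+1)·C(k−2, (k−j)/2 − 1). -/
open Finset

lemma powF (j : ℕ) : ∀ t, (j^2+1)^t * (j^2 - t) ≤ j^(2*t+2) := by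
  intro t
  induction t with
  | zero => simp [pow_succ]
  | succ t ih =>
    have key : (j^2+1) * (j^2 - (t+1)) ≤ j^2 * (j^2 - t) := by
      rcases le_or_gt (t+1) (j^2) with h | h
      · obtain ⟨s, hs⟩ := Nat.exists_eq_add_of_le h
        have h1 : j^2 - (t+1) = s := by omega
        have h2 : j^2 - t = s + 1 := by omega
        have h3 : s ≤ j^2 := by omega
        rw [h1, h2]; nlinarith
      · have h0 : j^2 - (t+1) = 0 := by omega
        simp [h0]
    calc (j^2+1)^(t+1) * (j^2 - (t+1))
        = (j^2+1)^t * ((j^2+1) * (j^2 - (t+1))) := by ring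
      _ ≤ (j^2+1)^t * (j^2 * (j^2 - t)) := Nat.mul_le_mul_left _ key
      _ = j^2 * ((j^2+1)^t * (j^2 - t)) := by ring
      _ ≤ j^2 * j^(2*t+2) := Nat.mul_le_mul_left _ ih
      _ = j^(2*(t+1)+2) := by ring

lemma powE (j : ℕ) (hj : 2 ≤ j) : j * (j^2+1)^(j/2) < (j+1) * j^(2*(j/2)) := by
  set d := j/2 with hd
  have hdj : 2*d ≤ j := by omega
  have hdlt : d < j^2 := by nlinarith
  have hG : j^3 < (j+1) * (j^2 - d) := by
    obtain ⟨s, hs⟩ := Nat.exists_eq_add_of_le hdlt.le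
    have h1 : j^2 - d = s := by omega
    rw [h1]
    nlinarith
  have hF := powF j d
  have hpos : 0 < j^2 - d := by omega
  have main : (j * (j^2+1)^d) * (j^2 - d) < ((j+1) * j^(2*d)) * (j^2 - d) := by
    calc (j * (j^2+1)^d) * (j^2 - d) = j * ((j^2+1)^d * (j^2-d)) := by ring
      _ ≤ j * j^(2*d+2) := Nat.mul_le_mul_left _ hF
      _ = j^(2*d) * j^3 := by ring
      _ < j^(2*d) * ((j+1)*(j^2-d)) := by
          have hp : 0 < j^(2*d) := Nat.pow_pos (by omega)
          exact mul_lt_mul_of_pos_left hG hp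
      _ = ((j+1)*j^(2*d)) * (j^2-d) := by ring
  exact Nat.lt_of_mul_lt_mul_right main

lemma hq_lemma (j m : ℕ) (hj : 1 ≤ j) (hm : j^3 ≤ m) : j^2*(m+j-1) ≤ (j^2+1)*m := by
  obtain ⟨e, rfl⟩ : ∃ e, j = e+1 := ⟨j-1, by omega⟩
  have h1 : m+(e+1)-1 = m+e := by omega
  rw [h1]; nlinarith

lemma lemma8 (j m : ℕ) (hj : 2 ≤ j) (hm : j^3 ≤ m) :
    j * (m+j-1)^(j/2) < (j+1) * m^(j/2) := by
  set d := j/2 with hd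
  have hq := hq_lemma j m (by omega) hm
  have hqd : (j^2*(m+j-1))^d ≤ ((j^2+1)*m)^d := Nat.pow_le_pow_left hq d
  have hE := powE j hj
  have hjp : 0 < (j^2)^d := Nat.pow_pos (by nlinarith)
  have main : (j * (m+j-1)^d) * (j^2)^d < ((j+1) * m^d) * (j^2)^d := by
    calc (j * (m+j-1)^d) * (j^2)^d = j * ((j^2*(m+j-1))^d) := by rw [mul_pow]; ring
      _ ≤ j * ((j^2+1)*m)^d := Nat.mul_le_mul_left _ hqd
      _ = (j * (j^2+1)^d) * m^d := by rw [mul_pow]; ring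
      _ < ((j+1) * j^(2*d)) * m^d := by
          have hmp : 0 < m^d := Nat.pow_pos (by nlinarith)
          exact mul_lt_mul_of_pos_right hE hmp
      _ = ((j+1) * m^d) * (j^2)^d := by rw [pow_mul]; ring
  exact Nat.lt_of_mul_lt_mul_right main


lemma ratio (j m : ℕ) (hj : 1 ≤ j) (hjm : j ≤ m) :
    ∀ t, t ≤ j → m^t * Nat.choose (2*m+j-2) ((m-1)+t)
      ≤ (m+j-1)^t * Nat.choose (2*m+j-2) (m-1) := by
  intro t
  induction t with
  | zero => intro _; simp
  | succ t ih =>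
    intro ht
    have ih' := ih (by omega)
    have key := Nat.choose_succ_right_eq (2*m+j-2) ((m-1)+t)
    have hsub : 2*m+j-2 - ((m-1)+t) = m+j-1-t := by omega
    rw [hsub] at key
    have step : m * Nat.choose (2*m+j-2) ((m-1)+(t+1))
        ≤ (m+j-1) * Nat.choose (2*m+j-2) ((m-1)+t) := by
      have h1 : m * Nat.choose (2*m+j-2) ((m-1)+t+1)
          ≤ ((m-1)+t+1) * Nat.choose (2*m+j-2) ((m-1)+t+1) :=
        Nat.mul_le_mul_right _ (by omega)
      have h2 : ((m-1)+t+1) * Nat.choose (2*m+j-2) ((m-1)+t+1)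
          = (m+j-1-t) * Nat.choose (2*m+j-2) ((m-1)+t) := by
        rw [mul_comm, key, mul_comm]
      have h3 : (m+j-1-t) * Nat.choose (2*m+j-2) ((m-1)+t)
          ≤ (m+j-1) * Nat.choose (2*m+j-2) ((m-1)+t) :=
        Nat.mul_le_mul_right _ (by omega)
      calc m * Nat.choose (2*m+j-2) ((m-1)+(t+1))
          = m * Nat.choose (2*m+j-2) ((m-1)+t+1) := by rw [show (m-1)+(t+1) = (m-1)+t+1 by omega]
        _ ≤ _ := h1
        _ = _ := h2
        _ ≤ _ := h3
    calc m^(t+1) * Nat.choose (2*m+j-2) ((m-1)+(t+1))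
        = m^t * (m * Nat.choose (2*m+j-2) ((m-1)+(t+1))) := by ring
      _ ≤ m^t * ((m+j-1) * Nat.choose (2*m+j-2) ((m-1)+t)) := Nat.mul_le_mul_left _ step
      _ = (m+j-1) * (m^t * Nat.choose (2*m+j-2) ((m-1)+t)) := by ring
      _ ≤ (m+j-1) * ((m+j-1)^t * Nat.choose (2*m+j-2) (m-1)) := Nat.mul_le_mul_left _ ih'
      _ = (m+j-1)^(t+1) * Nat.choose (2*m+j-2) (m-1) := by ring
lemma aux_main (j m : ℕ) (hj : 2 ≤ j) (hm : j^3 + 2*j^2 ≤ m) :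
    2 ^ (2*m+j-1) < 2 * (∑ i ∈ range m, Nat.choose (2*m+j-1) i)
      + 2 * ((j+1) * Nat.choose (2*m+j-2) (m-1)) := by
  have hjm : j ≤ m := by nlinarith
  have hm1 : 1 ≤ m := by omega
  have hall : ∑ i ∈ range (2*m+j), Nat.choose (2*m+j-1) i = 2^(2*m+j-1) := by
    have h := Nat.sum_range_choose (2*m+j-1)
    rwa [show 2*m+j-1+1 = 2*m+j from by omega] at h
  have hsplit : ∑ i ∈ range (2*m+j), Nat.choose (2*m+j-1) i
      = (∑ i ∈ range m, Nat.choose (2*m+j-1) i)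
        + ((∑ t ∈ range j, Nat.choose (2*m+j-1) (m+t))
        + (∑ t ∈ range m, Nat.choose (2*m+j-1) (m+j+t))) := by
    calc ∑ i ∈ range (2*m+j), Nat.choose (2*m+j-1) i
        = ∑ i ∈ Ico 0 (2*m+j), Nat.choose (2*m+j-1) i := by rw [range_eq_Ico]
      _ = (∑ i ∈ Ico 0 m, Nat.choose (2*m+j-1) i)
            + ∑ i ∈ Ico m (2*m+j), Nat.choose (2*m+j-1) i :=
          (Finset.sum_Ico_consecutive _ (Nat.zero_le m) (by omega)).symm
      _ = (∑ i ∈ Ico 0 m, Nat.choose (2*m+j-1) i)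
            + ((∑ i ∈ Ico m (m+j), Nat.choose (2*m+j-1) i)
            + ∑ i ∈ Ico (m+j) (2*m+j), Nat.choose (2*m+j-1) i) := by
          rw [Finset.sum_Ico_consecutive _ (by omega : m ≤ m+j) (by omega : m+j ≤ 2*m+j)]
      _ = _ := by
          rw [← range_eq_Ico, Finset.sum_Ico_eq_sum_range, Finset.sum_Ico_eq_sum_range,
            show m+j-m = j from by omega, show 2*m+j-(m+j) = m from by omega]
  have hlast : ∑ t ∈ range m, Nat.choose (2*m+j-1) (m+j+t)
      = ∑ i ∈ range m, Nat.choose (2*m+j-1) i := by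
    have h1 : ∀ t ∈ range m, Nat.choose (2*m+j-1) (m+j+t) = Nat.choose (2*m+j-1) (m-1-t) := by
      intro t ht
      simp only [mem_range] at ht
      have hle : m+j+t ≤ 2*m+j-1 := by omega
      have h := Nat.choose_symm hle
      rw [show 2*m+j-1-(m+j+t) = m-1-t from by omega] at h
      exact h.symm
    rw [Finset.sum_congr rfl h1]
    exact Finset.sum_range_reflect (fun i => Nat.choose (2*m+j-1) i) m
  have hmidbd : ∀ t ∈ range j, Nat.choose (2*m+j-1) (m+t)
      ≤ 2 * Nat.choose (2*m+j-2) ((2*m+j-2)/2) := by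
    intro t ht
    have hdecomp := Nat.choose_succ_succ (2*m+j-2) (m+t-1)
    simp only [Nat.succ_eq_add_one] at hdecomp
    rw [show (2*m+j-2)+1 = 2*m+j-1 from by omega, show (m+t-1)+1 = m+t from by omega] at hdecomp
    rw [hdecomp]
    have := Nat.add_le_add (Nat.choose_le_middle (m+t-1) (2*m+j-2))
      (Nat.choose_le_middle (m+t) (2*m+j-2))
    omega
  have hT : ∑ t ∈ range j, Nat.choose (2*m+j-1) (m+t)
      ≤ j * (2 * Nat.choose (2*m+j-2) ((2*m+j-2)/2)) := by
    calc ∑ t ∈ range j, Nat.choose (2*m+j-1) (m+t)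
        ≤ ∑ _t ∈ range j, 2 * Nat.choose (2*m+j-2) ((2*m+j-2)/2) := Finset.sum_le_sum hmidbd
      _ = j * (2 * Nat.choose (2*m+j-2) ((2*m+j-2)/2)) := by
          rw [Finset.sum_const, card_range, smul_eq_mul]
  have hc : (2*m+j-2)/2 = (m-1) + j/2 := by omega
  have hR := ratio j m (by omega) hjm (j/2) (by omega)
  have h8 := lemma8 j m hj (le_trans (Nat.le_add_right _ _) hm)
  have hCpos : 0 < Nat.choose (2*m+j-2) (m-1) := Nat.choose_pos (by omega)
  have hkey : j * Nat.choose (2*m+j-2) ((2*m+j-2)/2)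
      < (j+1) * Nat.choose (2*m+j-2) (m-1) := by
    rw [hc]
    have hmain : (j * Nat.choose (2*m+j-2) ((m-1)+j/2)) * m^(j/2)
        < ((j+1) * Nat.choose (2*m+j-2) (m-1)) * m^(j/2) := by
      calc (j * Nat.choose (2*m+j-2) ((m-1)+j/2)) * m^(j/2)
          = j * (m^(j/2) * Nat.choose (2*m+j-2) ((m-1)+j/2)) := by ring
        _ ≤ j * ((m+j-1)^(j/2) * Nat.choose (2*m+j-2) (m-1)) := Nat.mul_le_mul_left _ hR
        _ = (j * (m+j-1)^(j/2)) * Nat.choose (2*m+j-2) (m-1) := by ring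
        _ < ((j+1) * m^(j/2)) * Nat.choose (2*m+j-2) (m-1) :=
            mul_lt_mul_of_pos_right h8 hCpos
        _ = ((j+1) * Nat.choose (2*m+j-2) (m-1)) * m^(j/2) := by ring
    exact Nat.lt_of_mul_lt_mul_right hmain
  calc 2^(2*m+j-1) = ∑ i ∈ range (2*m+j), Nat.choose (2*m+j-1) i := hall.symm
    _ = 2 * (∑ i ∈ range m, Nat.choose (2*m+j-1) i)
          + ∑ t ∈ range j, Nat.choose (2*m+j-1) (m+t) := by rw [hsplit, hlast]; ring
    _ ≤ 2 * (∑ i ∈ range m, Nat.choose (2*m+j-1) i)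
          + j * (2 * Nat.choose (2*m+j-2) ((2*m+j-2)/2)) := Nat.add_le_add_left hT _
    _ = 2 * (∑ i ∈ range m, Nat.choose (2*m+j-1) i)
          + 2 * (j * Nat.choose (2*m+j-2) ((2*m+j-2)/2)) := by ring
    _ < 2 * (∑ i ∈ range m, Nat.choose (2*m+j-1) i)
          + 2 * ((j+1) * Nat.choose (2*m+j-2) (m-1)) := by
        exact Nat.add_lt_add_left (by omega) _

theorem stmt_12 (j k : ℕ) (hj : 2 ≤ j) (hk : 2 * j ^ 3 + 4 * j ^ 2 + j ≤ k)
    (he : Even (k + j)) :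
    (2 : ℝ) ^ (k - 2) - (∑ i ∈ Finset.range ((k - j) / 2), (Nat.choose (k - 1) i : ℝ))
      < ((j : ℝ) + 1) * (Nat.choose (k - 2) ((k - j) / 2 - 1) : ℝ) := by
  obtain ⟨t, ht⟩ := he
  have hjk : j ≤ k := le_trans (Nat.le_add_left j _) hk
  set m := (k - j) / 2 with hmdef
  have hk1 : k = 2*m+j := by omega
  have hm : j^3 + 2*j^2 ≤ m := by
    have h2 : 2*j^3 + 4*j^2 + j ≤ 2*m+j := hk1 ▸ hk
    linarith
  have key := aux_main j m hj hm
  rw [show k - 1 = 2*m+j-1 from by omega, show k - 2 = 2*m+j-2 from by omega]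
  have hm1 : 1 ≤ m := by nlinarith
  have keyR : (2:ℝ)^(2*m+j-1) < 2 * (∑ i ∈ range m, (Nat.choose (2*m+j-1) i : ℝ))
      + 2 * (((j:ℝ)+1) * (Nat.choose (2*m+j-2) (m-1) : ℝ)) := by
    exact_mod_cast key
  have hpow : (2:ℝ)^(2*m+j-1) = 2 * (2:ℝ)^(2*m+j-2) := by
    rw [show 2*m+j-1 = (2*m+j-2)+1 from by omega, pow_succ]; ring
  linarith
end

section
/- For all integers j and k with 2 ≤ j < k and k + j even: 2^{k−2} − Σ_{i=0}^{(k−j)/2 − 1} C(k−1, i) ≥ j·(1 + (j−1)/(k−j))·C(k−2, (k−j)/2 − 1); in particular, the left-hand side is strictly greater than j·C(k−2, (k−j)/2 − 1). -/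
private lemma choose_mono_half (n : ℕ) : ∀ b a, a ≤ b → 2 * b ≤ n →
    n.choose a ≤ n.choose b := by
  intro b
  induction b with
  | zero => intro a ha _; simp [Nat.le_zero.mp ha]
  | succ c ih =>
    intro a ha hb
    rcases Nat.lt_or_ge a (c + 1) with h | h
    · exact le_trans (ih a (Nat.lt_succ_iff.mp h) (by omega))
        (Nat.choose_le_succ_of_lt_half_left (by omega))
    · have : a = c + 1 := le_antisymm ha h
      simp [this]

private lemma choose_ge_end (n m i : ℕ) (h1 : m ≤ i) (h2 : i ≤ n - m) (h3 : 2 * m ≤ n) :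
    n.choose m ≤ n.choose i := by
  rcases Nat.le_total (2 * i) n with h | h
  · exact choose_mono_half n i m h1 h
  · rw [← Nat.choose_symm (show i ≤ n by omega)]
    exact choose_mono_half n (n - i) m (by omega) (by omega)

private lemma key_nat (m j : ℕ) (hm : 1 ≤ m) (hj : 1 ≤ j) :
    2 * (∑ i ∈ Finset.range m, (2 * m + j - 1).choose i)
      + j * (2 * m + j - 1).choose m ≤ 2 ^ (2 * m + j - 1) := by
  set n := 2 * m + j - 1 with hn
  have htot : ∑ i ∈ Finset.range (n + 1), n.choose i = 2 ^ n := Nat.sum_range_choose n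
  have hsplit : ∑ i ∈ Finset.range (n + 1), n.choose i
      = (∑ i ∈ Finset.range m, n.choose i)
        + (∑ i ∈ Finset.Ico m (m + j), n.choose i)
        + (∑ i ∈ Finset.Ico (m + j) (n + 1), n.choose i) := by
    rw [Finset.range_eq_Ico, Finset.range_eq_Ico,
      Finset.sum_Ico_consecutive (fun i => n.choose i) (show 0 ≤ m by omega)
        (show m ≤ m + j by omega),
      Finset.sum_Ico_consecutive (fun i => n.choose i) (show 0 ≤ m + j by omega)
        (show m + j ≤ n + 1 by omega)]
  have hsym : ∑ i ∈ Finset.Ico (m + j) (n + 1), n.choose i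
      = ∑ i ∈ Finset.range m, n.choose i := by
    apply Finset.sum_nbij' (i := fun a => n - a) (j := fun a => n - a)
    · intro a ha; simp only [Finset.mem_Ico] at ha ⊢
      simp only [Finset.mem_range]; omega
    · intro a ha; simp only [Finset.mem_range] at ha
      simp only [Finset.mem_Ico]; omega
    · intro a ha; simp only [Finset.mem_Ico] at ha; omega
    · intro a ha; simp only [Finset.mem_range] at ha; omega
    · intro a ha; simp only [Finset.mem_Ico] at ha
      rw [Nat.choose_symm (by omega)]
  have hmid : j * n.choose m ≤ ∑ i ∈ Finset.Ico m (m + j), n.choose i := by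
    have := Finset.card_nsmul_le_sum (Finset.Ico m (m + j)) (fun i => n.choose i)
      (n.choose m) (fun i hi => by
        rw [Finset.mem_Ico] at hi
        exact choose_ge_end n m i hi.1 (by omega) (by omega))
    simpa [Nat.card_Ico, smul_eq_mul] using this
  omega

theorem stmt_13 (j k : ℕ) (hj : 2 ≤ j) (hk : j < k) (he : Even (k + j)) :
    ((2 : ℝ) ^ (k - 2) - (∑ i ∈ Finset.range ((k - j) / 2), (Nat.choose (k - 1) i : ℝ))
      ≥ (j : ℝ) * (1 + ((j : ℝ) - 1) / ((k : ℝ) - (j : ℝ)))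
          * (Nat.choose (k - 2) ((k - j) / 2 - 1) : ℝ)) ∧
    ((2 : ℝ) ^ (k - 2) - (∑ i ∈ Finset.range ((k - j) / 2), (Nat.choose (k - 1) i : ℝ))
      > (j : ℝ) * (Nat.choose (k - 2) ((k - j) / 2 - 1) : ℝ)) := by
  obtain ⟨m, hm⟩ : ∃ m, k = j + 2 * m ∧ 1 ≤ m := by
    rcases he with ⟨t, ht⟩
    exact ⟨t - j, by omega, by omega⟩
  obtain ⟨hkm, hm1⟩ := hm
  have hdiv : (k - j) / 2 = m := by omega
  have hk1 : k - 1 = 2 * m + j - 1 := by omega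
  have hkey := key_nat m j hm1 (by omega)
  rw [← hk1] at hkey
  -- cast to ℝ
  have hkeyR : 2 * (∑ i ∈ Finset.range m, ((k-1).choose i : ℝ)) + (j : ℝ) * ((k-1).choose m)
      ≤ 2 ^ (k - 1) := by
    exact_mod_cast hkey
  have hpow : (2:ℝ) ^ (k - 1) = 2 * 2 ^ (k - 2) := by
    have : k - 1 = (k - 2) + 1 := by omega
    rw [this, pow_succ]; ring
  have hS : (2:ℝ) ^ (k-2) - (∑ i ∈ Finset.range m, ((k-1).choose i : ℝ))
      ≥ (j : ℝ) * ((k-1).choose m) / 2 := by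
    nlinarith [hkeyR, hpow]
  -- identity (k-1) * C(k-2, m-1) = m * C(k-1, m)
  have hid : (k - 1) * (k-2).choose (m-1) = (k-1).choose m * m := by
    have h := Nat.add_one_mul_choose_eq (k-2) (m-1)
    rw [show k-2+1 = k - 1 by omega, show m-1+1 = m by omega] at h
    exact h
  have hkcast : ((k - 1 : ℕ) : ℝ) = (k:ℝ) - 1 := by
    rw [Nat.cast_sub (by omega : 1 ≤ k), Nat.cast_one]
  have hidR : ((k:ℝ) - 1) * ((k-2).choose (m-1) : ℝ) = ((k-1).choose m : ℝ) * m := by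
    rw [← hkcast]; exact_mod_cast hid
  have hcastkj : (k:ℝ) - (j:ℝ) = 2 * m := by
    have : (k:ℝ) = (j:ℝ) + 2 * m := by exact_mod_cast hkm
    linarith
  have hRHS : (j : ℝ) * (1 + ((j : ℝ) - 1) / ((k : ℝ) - (j : ℝ))) * ((k-2).choose (m-1) : ℝ)
      = (j : ℝ) * ((k-1).choose m : ℝ) / 2 := by
    have hm0 : (m:ℝ) > 0 := by exact_mod_cast hm1
    have hkj1 : (1 : ℝ) + ((j:ℝ) - 1) / ((k:ℝ) - (j:ℝ)) = ((k:ℝ) - 1) / (2 * m) := by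
      rw [hcastkj]
      have : (k:ℝ) = (j:ℝ) + 2 * m := by exact_mod_cast hkm
      field_simp
      linarith
    rw [hkj1]
    field_simp
    nlinarith [hidR]
  have hpos : (0:ℝ) < ((k-2).choose (m-1) : ℝ) := by
    have : 0 < (k-2).choose (m-1) := Nat.choose_pos (by omega)
    exact_mod_cast this
  rw [hdiv]
  constructor
  · rw [hRHS]; exact hS
  · have h1 : (j:ℝ) * ((k-2).choose (m-1) : ℝ)
        < (j : ℝ) * (1 + ((j : ℝ) - 1) / ((k : ℝ) - (j : ℝ))) * ((k-2).choose (m-1) : ℝ) := by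
      have hj0 : (0:ℝ) < j := by exact_mod_cast (by omega : 0 < j)
      have hfrac : (0:ℝ) < ((j:ℝ) - 1) / ((k:ℝ) - (j:ℝ)) := by
        apply div_pos
        · have : (1:ℝ) ≤ (j:ℝ) := by exact_mod_cast (by omega : 1 ≤ j)
          linarith [show (2:ℝ) ≤ (j:ℝ) from by exact_mod_cast hj]
        · rw [hcastkj]; positivity
      nlinarith [mul_pos (mul_pos hj0 hfrac) hpos]
    calc (j:ℝ) * ((k-2).choose (m-1) : ℝ) < _ := h1
      _ ≤ _ := by rw [hRHS]; exact hS
end
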